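/- arXiv:2505.10891 — 3 statements merged into one kernel-verified Lean document; each statement's English description precedes it below -/
import Mathlib

section
/- Let ω(z) = Σ_{n≥1} cₙ zⁿ be a Schwarz function (analytic on the unit disk with ω(0)=0 and |ω(z)| ≤ 1). If |σ| ≤ 2 and μ ≥ 1, then |c₃ + σ c₁ c₂ + μ c₁³| ≤ μ. -/
open Complex Metric

noncomputable section

/-- A Schwarz function: analytic self-map of the unit disk fixing 0. -/
def IsSchwarz (w : ℂ → ℂ) : Prop :=
  DifferentiableOn ℂ w (ball (0:ℂ) 1) ∧ w 0 = 0 ∧ ∀ z ∈ ball (0:ℂ) 1, w z ∈ ball (0:ℂ) 1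

/-- `f` belongs to the class `𝒜` with Taylor coefficients `a`:
`f z = z + a₂ z² + a₃ z³ + ⋯` on the unit disk. -/
def InClassA (f : ℂ → ℂ) (a : ℕ → ℂ) : Prop :=
  a 0 = 0 ∧ a 1 = 1 ∧ ∀ z ∈ ball (0:ℂ) 1, HasSum (fun n => a n * z ^ n) (f z)

/-- `f ∈ 𝒮*(φ)`, i.e. `z f'(z)/f(z) ≺ φ(z)`, written without division. -/
def MemStarPhi (phi f : ℂ → ℂ) : Prop :=
  ∃ w, IsSchwarz w ∧ ∀ z ∈ ball (0:ℂ) 1, z * deriv f z = phi (w z) * f z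

/-- `f ∈ 𝒞(φ)`, i.e. `1 + z f''(z)/f'(z) ≺ φ(z)`, written without division. -/
def MemConvexPhi (phi f : ℂ → ℂ) : Prop :=
  ∃ w, IsSchwarz w ∧ ∀ z ∈ ball (0:ℂ) 1,
    deriv f z + z * deriv (deriv f) z = phi (w z) * deriv f z

/-- `φ` is a Ma–Minda function with (real) Taylor coefficients `B`:
analytic, univalent, `φ(0) = 1`, `B₁ > 0`, image in the right half-plane,
symmetric about the real axis, and starlike with respect to `1`. -/
def IsMaMinda (phi : ℂ → ℂ) (B : ℕ → ℝ) : Prop :=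
  DifferentiableOn ℂ phi (ball (0:ℂ) 1) ∧ Set.InjOn phi (ball (0:ℂ) 1) ∧
  (∀ z ∈ ball (0:ℂ) 1, HasSum (fun n => (B n : ℂ) * z ^ n) (phi z)) ∧
  B 0 = 1 ∧ 0 < B 1 ∧ (∀ z ∈ ball (0:ℂ) 1, 0 < (phi z).re) ∧
  (∀ z ∈ ball (0:ℂ) 1, phi ((starRingEnd ℂ) z) = (starRingEnd ℂ) (phi z)) ∧
  StarConvex ℝ (1 : ℂ) (phi '' ball (0:ℂ) 1)

/-- `f` is starlike of order `α` (univalent, normalized analyticity is stated separately). -/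
def IsStarlikeOfOrder (f : ℂ → ℂ) (α : ℝ) : Prop :=
  DifferentiableOn ℂ f (ball (0:ℂ) 1) ∧ Set.InjOn f (ball (0:ℂ) 1) ∧
  ∀ z ∈ ball (0:ℂ) 1, z ≠ 0 → α < (z * deriv f z / f z).re

/-- `f` is a convex function. -/
def IsConvexFun (f : ℂ → ℂ) : Prop :=
  DifferentiableOn ℂ f (ball (0:ℂ) 1) ∧ Set.InjOn f (ball (0:ℂ) 1) ∧
  ∀ z ∈ ball (0:ℂ) 1, 0 < (1 + z * deriv (deriv f) z / deriv f z).re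

/-- First logarithmic coefficient of the inverse, in terms of the coefficients of `f`. -/
def G₁ (a : ℕ → ℂ) : ℂ := -(a 2) / 2
/-- Second logarithmic coefficient of the inverse. -/
def G₂ (a : ℕ → ℂ) : ℂ := -(1/2) * (a 3 - (3/2) * a 2 ^ 2)
/-- Third logarithmic coefficient of the inverse. -/
def G₃ (a : ℕ → ℂ) : ℂ := -(1/2) * (a 4 - 4 * a 2 * a 3 + (10/3) * a 2 ^ 3)
/-- Second Taylor coefficient of the inverse function. -/
def bc₂ (a : ℕ → ℂ) : ℂ := -(a 2)
/-- Third Taylor coefficient of the inverse function. -/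
def bc₃ (a : ℕ → ℂ) : ℂ := 2 * a 2 ^ 2 - a 3
/-- Fourth Taylor coefficient of the inverse function. -/
def bc₄ (a : ℕ → ℂ) : ℂ := -5 * a 2 ^ 3 + 5 * a 2 * a 3 - a 4

/-- Region `Ω₁` of Prokhorov–Szynal. -/
def Omega1 (s m : ℝ) : Prop := |s| ≤ 2 ∧ 1 ≤ m
/-- Region `Ω₂` of Prokhorov–Szynal. -/
def Omega2 (s m : ℝ) : Prop := 2 ≤ |s| ∧ |s| ≤ 4 ∧ (s ^ 2 + 8) / 12 ≤ m
/-- Region `Ω₃` of Prokhorov–Szynal. -/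
def Omega3 (s m : ℝ) : Prop := 4 ≤ |s| ∧ (2/3) * (|s| - 1) ≤ m


namespace SchwarzAux

open Filter Topology

lemma key_ineq (R S t m X : ℝ) (hR0 : 0 ≤ R) (hR1 : R ≤ 1) (hS0 : 0 ≤ S) (hS1 : S ≤ 1)
    (ht : t^2 ≤ 4) (hm : 1 ≤ m) :
    (1-R)^2*R*S^2 + t^2*(1-R)^2*R*S + m^2*R^3 + 2*t*(1-R)^2*S*X
      - 2*m*(1-R)*(2*X^2 - R^2*S) - 2*t*(1-R)*m*R*X ≤ (m - (1-R)*(1-S))^2 := by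
  have hm0 : (0:ℝ) < m := lt_of_lt_of_le one_pos hm
  have hlam : (0:ℝ) ≤ 1 - R := by linarith
  have e1 : (0:ℝ) ≤ 1 - R^3 := by nlinarith [mul_nonneg hR0 hR0]
  have hS' : 0 ≤ m^2*(1-R^3) - m*(1-R)^2 + 2*m*S*(1-R)^2*(1+R) + S^2*(1-R)^3 := by
    nlinarith [mul_nonneg (mul_nonneg hm0.le (by linarith : (0:ℝ) ≤ m - 1)) e1,
      mul_nonneg hm0.le (mul_nonneg (mul_nonneg hR0 hlam) (by linarith : (0:ℝ) ≤ 2 + R)),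
      mul_nonneg (mul_nonneg hS0 hm0.le) (mul_nonneg (mul_nonneg hlam hlam) (by linarith : (0:ℝ) ≤ 1 + R)),
      mul_nonneg (mul_nonneg hS0 hS0) (mul_nonneg (mul_nonneg hlam hlam) hlam)]
  have h1 : 0 ≤ (1-R) * (4*m*X - t*((1-R)*S - m*R))^2 :=
    mul_nonneg hlam (sq_nonneg _)
  have h2 : 0 ≤ (4 - t^2) * (4*m*(1-R)^2*R*S + (1-R)*((1-R)*S - m*R)^2) := by
    apply mul_nonneg (by linarith)
    have : 0 ≤ 4*m*(1-R)^2*R*S := by positivity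
    nlinarith [mul_nonneg hlam (sq_nonneg ((1-R)*S - m*R))]
  have h3 : 0 ≤ 4*(m-1) * (m^2*(1-R^3) - m*(1-R)^2 + 2*m*S*(1-R)^2*(1+R) + S^2*(1-R)^3) :=
    mul_nonneg (by linarith) hS'
  nlinarith [h1, h2, h3, hm0, mul_pos hm0 hm0]

lemma mobius_bound (a w : ℂ) (ha : ‖a‖ ≤ 1) (hw : ‖w‖ ≤ 1)
    (hd : (1 - (starRingEnd ℂ) a * w) ≠ 0) :
    ‖(a - w) / (1 - (starRingEnd ℂ) a * w)‖ ≤ 1 := by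
  rw [norm_div, div_le_one (norm_pos_iff.mpr hd)]
  have h1 : Complex.normSq (1 - (starRingEnd ℂ) a * w) - Complex.normSq (a - w)
      = (1 - Complex.normSq a) * (1 - Complex.normSq w) := by
    simp only [Complex.normSq_apply, Complex.sub_re, Complex.sub_im, Complex.mul_re,
      Complex.mul_im, Complex.one_re, Complex.one_im, Complex.conj_re, Complex.conj_im]
    ring
  have ha' : Complex.normSq a ≤ 1 := by
    rw [← Complex.sq_norm]; nlinarith [norm_nonneg a, ha]
  have hw' : Complex.normSq w ≤ 1 := by
    rw [← Complex.sq_norm]; nlinarith [norm_nonneg w, hw]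
  have h2 : Complex.normSq (a - w) ≤ Complex.normSq (1 - (starRingEnd ℂ) a * w) := by
    nlinarith [Complex.normSq_nonneg a, Complex.normSq_nonneg w]
  have h3 := Real.sqrt_le_sqrt h2
  rwa [Complex.norm_def, Complex.norm_def]

lemma schwarz_step {f : ℂ → ℂ} (hd : DifferentiableOn ℂ f (ball (0:ℂ) 1))
    (hb : ∀ z ∈ ball (0:ℂ) 1, ‖f z‖ ≤ 1) (h0 : f 0 = 0) :
    DifferentiableOn ℂ (dslope f 0) (ball (0:ℂ) 1) ∧
      ∀ z ∈ ball (0:ℂ) 1, ‖dslope f 0 z‖ ≤ 1 := by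
  refine ⟨(differentiableOn_dslope (ball_mem_nhds _ one_pos)).mpr hd, fun z hz => ?_⟩
  refine le_of_forall_pos_le_add fun ε hε => ?_
  have hmaps : Set.MapsTo f (ball (0:ℂ) 1) (ball (f 0) (1+ε)) := fun u hu => by
    rw [h0]
    exact mem_ball_zero_iff.mpr (lt_of_le_of_lt (hb u hu) (by linarith))
  have := Complex.norm_dslope_le_div_of_mapsTo_ball hd (hmaps.mono_right ball_subset_closedBall) hz
  simpa using this

lemma const_of_norm_eq_one {f : ℂ → ℂ} (hd : DifferentiableOn ℂ f (ball (0:ℂ) 1))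
    (hb : ∀ z ∈ ball (0:ℂ) 1, ‖f z‖ ≤ 1) (h1 : ‖f 0‖ = 1) :
    ∀ z ∈ ball (0:ℂ) 1, f z = f 0 := by
  have hmax : IsMaxOn (norm ∘ f) (ball (0:ℂ) 1) 0 := fun z hz => by
    simp only [Function.comp_apply, h1]
    exact hb z hz
  have := Complex.eqOn_of_isPreconnected_of_isMaxOn_norm
    (convex_ball (0:ℂ) 1).isPreconnected isOpen_ball hd (mem_ball_self one_pos) hmax
  exact fun z hz => this hz

lemma eq_at_zero_of_punctured {f g : ℂ → ℂ} (hf : ContinuousAt f 0) (hg : ContinuousAt g 0)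
    (h : ∀ z ∈ ball (0:ℂ) 1, z ≠ 0 → f z = g z) : f 0 = g 0 := by
  have hev : f =ᶠ[𝓝[≠] (0:ℂ)] g := by
    filter_upwards [mem_nhdsWithin_of_mem_nhds (ball_mem_nhds (0:ℂ) one_pos),
      self_mem_nhdsWithin] with z hz hz'
    exact h z hz hz'
  exact tendsto_nhds_unique ((hf.tendsto.mono_left nhdsWithin_le_nhds).congr' hev)
    (hg.tendsto.mono_left nhdsWithin_le_nhds)

lemma radius_ge_one {c : ℕ → ℂ}
    (hc : ∀ z : ℂ, ‖z‖ < 1 → Summable (fun n => c n * z ^ n)) (k : ℕ) :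
    1 ≤ (FormalMultilinearSeries.ofScalars ℂ (fun n => c (n + k))).radius := by
  refine ENNReal.le_of_forall_nnreal_lt fun r hr => ?_
  have hr1 : (r:ℝ) < 1 := by exact_mod_cast hr
  have hr0 : (0:ℝ) ≤ r := r.2
  set ρ : ℝ := ((r:ℝ) + 1)/2 with hρ
  have hρ0 : 0 < ρ := by simp only [hρ]; linarith
  have hρ1 : ρ < 1 := by simp only [hρ]; linarith
  have hrρ : (r:ℝ) ≤ ρ := by simp only [hρ]; linarith
  have hsum := hc (ρ:ℂ) (by rwa [Complex.norm_real, Real.norm_of_nonneg hρ0.le])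
  have hbdd : BddAbove (Set.range fun n => ‖c n * (ρ:ℂ) ^ n‖) :=
    hsum.norm.tendsto_atTop_zero.bddAbove_range
  obtain ⟨C, hC⟩ := hbdd
  have hCn : ∀ n, ‖c n‖ * ρ ^ n ≤ C := fun n => by
    have := hC (Set.mem_range_self n)
    rwa [norm_mul, norm_pow, Complex.norm_real, Real.norm_of_nonneg hρ0.le] at this
  refine FormalMultilinearSeries.le_radius_of_bound _ (C / ρ ^ k) fun n => ?_
  rw [FormalMultilinearSeries.ofScalars_norm]
  have h1 : ‖c (n + k)‖ * (r:ℝ) ^ n ≤ ‖c (n + k)‖ * ρ ^ n :=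
    mul_le_mul_of_nonneg_left (pow_le_pow_left₀ hr0 hrρ n) (norm_nonneg _)
  have h2 : ‖c (n + k)‖ * ρ ^ n = (‖c (n + k)‖ * ρ ^ (n + k)) / ρ ^ k := by
    rw [pow_add]; field_simp
  have h3 : (‖c (n + k)‖ * ρ ^ (n + k)) / ρ ^ k ≤ C / ρ ^ k :=
    div_le_div_of_nonneg_right (hCn (n + k)) (by positivity) |>.trans_eq rfl
  calc ‖c (n + k)‖ * (r:ℝ) ^ n ≤ ‖c (n + k)‖ * ρ ^ n := h1
    _ = (‖c (n + k)‖ * ρ ^ (n + k)) / ρ ^ k := h2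
    _ ≤ C / ρ ^ k := h3

set_option maxHeartbeats 1000000 in
lemma normSq_E (aa dd : ℂ) (t m : ℝ) :
    Complex.normSq ((1 - ((Complex.normSq aa : ℝ):ℂ)) * (starRingEnd ℂ) aa * dd ^ 2
      + (t:ℂ) * ((1 - ((Complex.normSq aa : ℝ):ℂ)) * (aa * dd)) - (m:ℂ) * aa ^ 3)
    = (1-Complex.normSq aa)^2*(Complex.normSq aa)*(Complex.normSq dd)^2
      + t^2*(1-Complex.normSq aa)^2*(Complex.normSq aa)*(Complex.normSq dd)
      + m^2*(Complex.normSq aa)^3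
      + 2*t*(1-Complex.normSq aa)^2*(Complex.normSq dd)*(((starRingEnd ℂ) aa ^ 2 * dd).re)
      - 2*m*(1-Complex.normSq aa)*(2*(((starRingEnd ℂ) aa ^ 2 * dd).re)^2
          - (Complex.normSq aa)^2*(Complex.normSq dd))
      - 2*t*(1-Complex.normSq aa)*m*(Complex.normSq aa)*(((starRingEnd ℂ) aa ^ 2 * dd).re) := by
  simp only [pow_succ, pow_zero, one_mul, Complex.normSq_apply, Complex.mul_re,
    Complex.mul_im, Complex.add_re, Complex.add_im, Complex.sub_re, Complex.sub_im,
    Complex.one_re, Complex.one_im, Complex.conj_re, Complex.conj_im,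
    Complex.ofReal_re, Complex.ofReal_im]
  ring

lemma final_bound (a d1 d2 c2 c3 : ℂ) (σ μ : ℝ) (hσ : |σ| ≤ 2) (hμ : 1 ≤ μ)
    (ha : Complex.normSq a ≤ 1) (hd1 : ‖d1‖ ≤ 1)
    (hV1 : d1 * (1 - ((Complex.normSq a : ℝ):ℂ)) = -c2)
    (hV2 : d2 * (1 - ((Complex.normSq a : ℝ):ℂ)) - d1 * ((starRingEnd ℂ) a * c2) = -c3)
    (hd2n : ‖d2‖ ≤ 1 - Complex.normSq d1) :
    ‖c3 + (σ:ℂ) * a * c2 + (μ:ℂ) * a ^ 3‖ ≤ μ := by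
  set ν : ℝ := Complex.normSq a with hν_def
  set Sv : ℝ := Complex.normSq d1 with hSv_def
  set X : ℝ := ((starRingEnd ℂ) a ^ 2 * d1).re with hX_def
  have hν0 : 0 ≤ ν := Complex.normSq_nonneg a
  have hSv0 : 0 ≤ Sv := Complex.normSq_nonneg d1
  have hSv1 : Sv ≤ 1 := by
    rw [hSv_def, ← Complex.sq_norm]; nlinarith [norm_nonneg d1]
  have hc2 : c2 = -((1 - (ν:ℂ)) * d1) := by linear_combination hV1
  have hc3 : c3 = -((1 - (ν:ℂ)) * (d2 + (starRingEnd ℂ) a * d1^2)) := by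
    linear_combination hV2 + ((starRingEnd ℂ) a * d1) * hc2
  set E : ℂ := (1 - (ν:ℂ)) * (starRingEnd ℂ) a * d1 ^ 2
    + (σ:ℂ) * ((1 - (ν:ℂ)) * (a * d1)) - (μ:ℂ) * a ^ 3 with hE_def
  have hsplit : c3 + (σ:ℂ) * a * c2 + (μ:ℂ) * a ^ 3 = -((1 - (ν:ℂ)) * d2) - E := by
    rw [hc2, hc3, hE_def]; ring
  have habs2 : ‖E‖ ^ 2 = (1-ν)^2*ν*Sv^2 + σ^2*(1-ν)^2*ν*Sv + μ^2*ν^3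
      + 2*σ*(1-ν)^2*Sv*X - 2*μ*(1-ν)*(2*X^2 - ν^2*Sv) - 2*σ*(1-ν)*μ*ν*X := by
    rw [Complex.sq_norm, hE_def, hX_def, hSv_def, hν_def]
    exact normSq_E a d1 σ μ
  have hσ2 : σ^2 ≤ 4 := by nlinarith [_root_.sq_abs σ, abs_nonneg σ]
  have hkey := key_ineq ν Sv σ μ X hν0 ha hSv0 hSv1 hσ2 hμ
  rw [← habs2] at hkey
  have hBnn : 0 ≤ μ - (1-ν)*(1-Sv) := by nlinarith
  have hEle : ‖E‖ ≤ μ - (1-ν)*(1-Sv) := by nlinarith [norm_nonneg E]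
  rw [hsplit]
  calc ‖-((1 - (ν:ℂ)) * d2) - E‖ ≤ ‖(1 - (ν:ℂ)) * d2‖ + ‖E‖ := by
        rw [show -((1 - (ν:ℂ)) * d2) - E = -((1 - (ν:ℂ)) * d2 + E) by ring, norm_neg]
        exact norm_add_le _ _
    _ ≤ (1-ν)*(1-Sv) + (μ - (1-ν)*(1-Sv)) := by
        apply add_le_add
        · rw [norm_mul, show (1:ℂ) - (ν:ℂ) = ((1-ν:ℝ):ℂ) by push_cast; ring,
            Complex.norm_real, Real.norm_of_nonneg (by linarith : (0:ℝ) ≤ 1 - ν)]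
          exact mul_le_mul_of_nonneg_left hd2n (by linarith)
        · exact hEle
    _ = μ := by ring


end SchwarzAux

theorem stmt_2 (w : ℂ → ℂ) (c : ℕ → ℂ) (σ μ : ℝ)
    (hw : IsSchwarz w) (hc0 : c 0 = 0)
    (hcsum : ∀ z ∈ ball (0:ℂ) 1, HasSum (fun n => c n * z ^ n) (w z))
    (hσ : |σ| ≤ 2) (hμ : 1 ≤ μ) :
    ‖c 3 + (σ : ℂ) * c 1 * c 2 + (μ : ℂ) * c 1 ^ 3‖ ≤ μ := by
  obtain ⟨hwd, hw0, hwb⟩ := hw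
  have hμ0 : (0:ℝ) < μ := lt_of_lt_of_le one_pos hμ
  have hsum : ∀ z : ℂ, ‖z‖ < 1 → Summable (fun n => c n * z ^ n) := fun z hz =>
    (hcsum z (mem_ball_zero_iff.mpr hz)).summable
  have hball : Metric.eball (0:ℂ) 1 = ball (0:ℂ) 1 := by
    rw [show (1:ENNReal) = ((1:NNReal):ENNReal) from rfl, Metric.emetric_ball_nnreal]
    norm_num
  set p : ℕ → FormalMultilinearSeries ℂ ℂ ℂ :=
    fun k => FormalMultilinearSeries.ofScalars ℂ (fun n => c (n + k)) with hpdef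
  have hrad : ∀ k, 1 ≤ (p k).radius := fun k => SchwarzAux.radius_ge_one hsum k
  set h : ℕ → ℂ → ℂ := fun k => (p k).sum with hhdef
  have hpow : ∀ k, HasFPowerSeriesOnBall (h k) (p k) 0 1 := fun k =>
    ((p k).hasFPowerSeriesOnBall (lt_of_lt_of_le zero_lt_one (hrad k))).mono zero_lt_one (hrad k)
  have hdiff : ∀ k, DifferentiableOn ℂ (h k) (ball (0:ℂ) 1) := fun k => by
    have := (hpow k).differentiableOn
    rwa [hball] at this
  have hcont : ∀ k, ContinuousAt (h k) 0 := fun k =>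
    (hdiff k).continuousOn.continuousAt (ball_mem_nhds _ one_pos)
  have hhsum : ∀ k, ∀ z ∈ ball (0:ℂ) 1, HasSum (fun n => c (n + k) * z ^ n) (h k z) := by
    intro k z hz
    have hz' : z ∈ Metric.eball (0:ℂ) 1 := by rwa [hball]
    have h1 := (hpow k).hasSum hz'
    simp only [hpdef, FormalMultilinearSeries.ofScalars_apply_eq, smul_eq_mul, zero_add] at h1
    exact h1
  have hrec : ∀ k, ∀ z ∈ ball (0:ℂ) 1, h k z = c k + z * h (k+1) z := by
    intro k z hz
    have h1 := (hhsum (k+1) z hz).mul_left z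
    have h2 : (fun n => z * (c (n + (k+1)) * z ^ n))
        = fun n => c ((n + 1) + k) * z ^ (n + 1) := by
      funext n
      rw [show n + (k+1) = n + 1 + k by omega]
      ring
    rw [h2] at h1
    have h3 := (hasSum_nat_add_iff (f := fun n => c (n + k) * z ^ n) 1).mp h1
    simp only [Finset.range_one, Finset.sum_singleton, pow_zero, mul_one, zero_add] at h3
    have h4 := (hhsum k z hz).unique h3
    rw [h4]; ring
  have h0mem : (0:ℂ) ∈ ball (0:ℂ) 1 := mem_ball_self one_pos
  have h0val : ∀ k, h k 0 = c k := fun k => by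
    have := hrec k 0 h0mem; simpa using this
  have hweq : ∀ z ∈ ball (0:ℂ) 1, w z = h 0 z := fun z hz =>
    HasSum.unique (hcsum z hz) (by simpa using hhsum 0 z hz)
  have hb0 : ∀ z ∈ ball (0:ℂ) 1, ‖h 0 z‖ ≤ 1 := fun z hz => by
    rw [← hweq z hz]; exact (mem_ball_zero_iff.mp (hwb z hz)).le
  have h00 : h 0 0 = 0 := by rw [h0val 0, hc0]
  obtain ⟨hds_d, hds_b⟩ := SchwarzAux.schwarz_step (hdiff 0) hb0 h00
  have hzh1 : ∀ z ∈ ball (0:ℂ) 1, z * h 1 z = h 0 z := fun z hz => by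
    rw [hrec 0 z hz, hc0]; ring
  have hdseq : ∀ z ∈ ball (0:ℂ) 1, z ≠ 0 → dslope (h 0) 0 z = h 1 z := by
    intro z hz hz0
    rw [dslope_of_ne _ hz0, slope_def_field, h00, sub_zero, sub_zero, ← hzh1 z hz]
    field_simp
  have hb1 : ∀ z ∈ ball (0:ℂ) 1, ‖h 1 z‖ ≤ 1 := by
    intro z hz
    by_cases hz0 : z = 0
    · subst hz0
      have heq : dslope (h 0) 0 0 = h 1 0 := SchwarzAux.eq_at_zero_of_punctured
        (hds_d.continuousOn.continuousAt (ball_mem_nhds _ one_pos)) (hcont 1) hdseq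
      rw [← heq]; exact hds_b 0 h0mem
    · rw [← hdseq z hz hz0]; exact hds_b z hz
  set a : ℂ := c 1 with ha_def
  have ha1 : ‖a‖ ≤ 1 := by
    have := hb1 0 h0mem; rwa [h0val 1] at this
  rcases lt_or_eq_of_le ha1 with hlt | haeq
  ·
    -- main case ‖a‖ < 1
    set ν : ℝ := Complex.normSq a with hν_def
    have hν0 : 0 ≤ ν := Complex.normSq_nonneg a
    have hν1 : ν < 1 := by
      rw [hν_def, ← Complex.sq_norm]; nlinarith [norm_nonneg a]
    have hden : ∀ z ∈ ball (0:ℂ) 1, (1 - (starRingEnd ℂ) a * h 1 z) ≠ 0 := by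
      intro z hz heq
      have h1 : ‖(starRingEnd ℂ) a * h 1 z‖ < 1 := by
        rw [norm_mul, RCLike.norm_conj]
        exact lt_of_le_of_lt (mul_le_of_le_one_right (norm_nonneg a) (hb1 z hz)) hlt
      rw [sub_eq_zero] at heq
      rw [← heq] at h1
      simp at h1
    set F : ℂ → ℂ := fun z => (a - h 1 z) / (1 - (starRingEnd ℂ) a * h 1 z) with hFdef
    have hFd : DifferentiableOn ℂ F (ball (0:ℂ) 1) :=
      DifferentiableOn.div ((differentiableOn_const a).sub (hdiff 1))
        ((differentiableOn_const 1).sub ((differentiableOn_const _).mul (hdiff 1))) hden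
    have hFb : ∀ z ∈ ball (0:ℂ) 1, ‖F z‖ ≤ 1 := fun z hz =>
      SchwarzAux.mobius_bound a (h 1 z) hlt.le (hb1 z hz) (hden z hz)
    have h10 : h 1 0 = a := by rw [h0val 1]
    have hF0 : F 0 = 0 := by
      simp only [hFdef]; rw [h10, sub_self, zero_div]
    obtain ⟨hKd, hKb⟩ := SchwarzAux.schwarz_step hFd hFb hF0
    set K : ℂ → ℂ := dslope F 0 with hKdef
    have hKval : ∀ z : ℂ, z * K z = F z := fun z => by
      have h1 := sub_smul_dslope F 0 z
      rw [sub_zero, hF0, sub_zero, smul_eq_mul, ← hKdef] at h1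
      exact h1
    have hKcont : ContinuousAt K 0 := hKd.continuousOn.continuousAt (ball_mem_nhds _ one_pos)
    set d1 : ℂ := K 0 with hd1_def
    have hd1 : ‖d1‖ ≤ 1 := hKb 0 h0mem
    have hconj_a : (starRingEnd ℂ) a * a = ((ν:ℝ):ℂ) := by
      rw [hν_def, mul_comm, Complex.mul_conj]
    have hE1 : ∀ z ∈ ball (0:ℂ) 1,
        K z * (1 - (ν:ℂ) - (starRingEnd ℂ) a * z * h 2 z) = -(h 2 z) := by
      have hpunct : ∀ z ∈ ball (0:ℂ) 1, z ≠ 0 →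
          K z * (1 - (ν:ℂ) - (starRingEnd ℂ) a * z * h 2 z) = -(h 2 z) := by
        intro z hz hz0
        have hh1 : h 1 z = a + z * h 2 z := by rw [hrec 1 z hz, ← ha_def]
        have hF : F z * (1 - (starRingEnd ℂ) a * h 1 z) = a - h 1 z :=
          div_mul_cancel₀ _ (hden z hz)
        rw [← hKval z, hh1] at hF
        apply mul_left_cancel₀ hz0
        linear_combination hF + (K z) * hconj_a * z
      intro z hz
      by_cases hz0 : z = 0
      · subst hz0
        have := SchwarzAux.eq_at_zero_of_punctured
          (f := fun z => K z * (1 - (ν:ℂ) - (starRingEnd ℂ) a * z * h 2 z))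
          (g := fun z => -(h 2 z))
          (hKcont.mul (continuousAt_const.sub
            ((continuousAt_const.mul continuousAt_id).mul (hcont 2)))) (hcont 2).neg hpunct
        simpa using this
      · exact hpunct z hz hz0
    have hV1 : d1 * (1 - (ν:ℂ)) = -(c 2) := by
      have h1 := hE1 0 h0mem
      rw [mul_zero, zero_mul, sub_zero, h0val 2, ← hd1_def] at h1
      exact h1
    have hK2d : DifferentiableOn ℂ (dslope K 0) (ball (0:ℂ) 1) :=
      (differentiableOn_dslope (ball_mem_nhds _ one_pos)).mpr hKd
    set K2 : ℂ → ℂ := dslope K 0 with hK2def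
    have hK2cont : ContinuousAt K2 0 :=
      hK2d.continuousOn.continuousAt (ball_mem_nhds _ one_pos)
    have hKrec : ∀ z : ℂ, z * K2 z = K z - d1 := fun z => by
      have h1 := sub_smul_dslope K 0 z
      rw [sub_zero, smul_eq_mul, ← hK2def, ← hd1_def] at h1
      exact h1
    set d2 : ℂ := K2 0 with hd2_def
    have hE2 : ∀ z ∈ ball (0:ℂ) 1,
        K2 z * (1 - (ν:ℂ) - (starRingEnd ℂ) a * z * h 2 z)
          - d1 * ((starRingEnd ℂ) a * h 2 z) = -(h 3 z) := by
      have hpunct : ∀ z ∈ ball (0:ℂ) 1, z ≠ 0 →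
          K2 z * (1 - (ν:ℂ) - (starRingEnd ℂ) a * z * h 2 z)
            - d1 * ((starRingEnd ℂ) a * h 2 z) = -(h 3 z) := by
        intro z hz hz0
        have e1 := hE1 z hz
        have hh2 : h 2 z = c 2 + z * h 3 z := hrec 2 z hz
        have hKz : K z = d1 + z * K2 z := by linear_combination -hKrec z
        rw [hKz, hh2] at e1
        rw [hh2]
        apply mul_left_cancel₀ hz0
        linear_combination e1 - hV1
      intro z hz
      by_cases hz0 : z = 0
      · subst hz0
        have := SchwarzAux.eq_at_zero_of_punctured
          (f := fun z => K2 z * (1 - (ν:ℂ) - (starRingEnd ℂ) a * z * h 2 z)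
            - d1 * ((starRingEnd ℂ) a * h 2 z))
          (g := fun z => -(h 3 z))
          ((hK2cont.mul (continuousAt_const.sub
            ((continuousAt_const.mul continuousAt_id).mul (hcont 2)))).sub
            (continuousAt_const.mul (continuousAt_const.mul (hcont 2)))) (hcont 3).neg hpunct
        simpa using this
      · exact hpunct z hz hz0
    have hV2 : d2 * (1 - (ν:ℂ)) - d1 * ((starRingEnd ℂ) a * c 2) = -(c 3) := by
      have h1 := hE2 0 h0mem
      rw [mul_zero, zero_mul, sub_zero, h0val 2, h0val 3, ← hd2_def] at h1
      exact h1
    have hd2n : ‖d2‖ ≤ 1 - Complex.normSq d1 := by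
      rcases lt_or_eq_of_le hd1 with hd1lt | hd1eq
      · have hdenK : ∀ z ∈ ball (0:ℂ) 1, (1 - (starRingEnd ℂ) d1 * K z) ≠ 0 := by
          intro z hz heq
          have h1 : ‖(starRingEnd ℂ) d1 * K z‖ < 1 := by
            rw [norm_mul, RCLike.norm_conj]
            exact lt_of_le_of_lt (mul_le_of_le_one_right (norm_nonneg d1) (hKb z hz)) hd1lt
          rw [sub_eq_zero] at heq
          rw [← heq] at h1
          simp at h1
        set G : ℂ → ℂ := fun z => (d1 - K z) / (1 - (starRingEnd ℂ) d1 * K z) with hGdef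
        have hGd : DifferentiableOn ℂ G (ball (0:ℂ) 1) :=
          DifferentiableOn.div ((differentiableOn_const d1).sub hKd)
            ((differentiableOn_const 1).sub ((differentiableOn_const _).mul hKd)) hdenK
        have hGb : ∀ z ∈ ball (0:ℂ) 1, ‖G z‖ ≤ 1 := fun z hz =>
          SchwarzAux.mobius_bound d1 (K z) hd1lt.le (hKb z hz) (hdenK z hz)
        have hG0 : G 0 = 0 := by
          simp only [hGdef]; rw [← hd1_def, sub_self, zero_div]
        obtain ⟨hLd, hLb⟩ := SchwarzAux.schwarz_step hGd hGb hG0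
        set L : ℂ → ℂ := dslope G 0 with hLdef
        have hLval : ∀ z : ℂ, z * L z = G z := fun z => by
          have h1 := sub_smul_dslope G 0 z
          rw [sub_zero, hG0, sub_zero, smul_eq_mul, ← hLdef] at h1
          exact h1
        have hLcont : ContinuousAt L 0 :=
          hLd.continuousOn.continuousAt (ball_mem_nhds _ one_pos)
        have hLpunct : ∀ z ∈ ball (0:ℂ) 1, z ≠ 0 →
            L z * (1 - (starRingEnd ℂ) d1 * K z) = -(K2 z) := by
          intro z hz hz0
          have hG : G z * (1 - (starRingEnd ℂ) d1 * K z) = d1 - K z :=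
            div_mul_cancel₀ _ (hdenK z hz)
          rw [← hLval z] at hG
          apply mul_left_cancel₀ hz0
          linear_combination hG + hKrec z
        have hL0 : L 0 * (1 - (starRingEnd ℂ) d1 * K 0) = -(K2 0) := by
          have := SchwarzAux.eq_at_zero_of_punctured
            (f := fun z => L z * (1 - (starRingEnd ℂ) d1 * K z))
            (g := fun z => -(K2 z))
            (hLcont.mul (continuousAt_const.sub (continuousAt_const.mul hKcont)))
            hK2cont.neg hLpunct
          simpa using this
        rw [← hd1_def, ← hd2_def] at hL0
        have hcd1 : (starRingEnd ℂ) d1 * d1 = ((Complex.normSq d1 : ℝ) : ℂ) := by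
          rw [mul_comm, Complex.mul_conj]
        rw [hcd1] at hL0
        have hnd2 : ‖d2‖ = ‖L 0‖ * ‖(1:ℂ) - ((Complex.normSq d1 : ℝ):ℂ)‖ := by
          rw [← norm_neg d2, ← hL0, norm_mul]
        have hrw1 : ‖(1:ℂ) - ((Complex.normSq d1 : ℝ):ℂ)‖ = 1 - Complex.normSq d1 := by
          rw [show (1:ℂ) - ((Complex.normSq d1:ℝ):ℂ) = (((1 - Complex.normSq d1 : ℝ)):ℂ) by
            push_cast; ring, Complex.norm_real, Real.norm_of_nonneg]
          have : Complex.normSq d1 ≤ 1 := by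
            rw [← Complex.sq_norm]; nlinarith [norm_nonneg d1]
          linarith
        rw [hnd2, hrw1]
        have hq : Complex.normSq d1 ≤ 1 := by
          rw [← Complex.sq_norm]; nlinarith [norm_nonneg d1]
        calc ‖L 0‖ * (1 - Complex.normSq d1) ≤ 1 * (1 - Complex.normSq d1) :=
              mul_le_mul_of_nonneg_right (hLb 0 h0mem) (by linarith)
          _ = 1 - Complex.normSq d1 := one_mul _
      · have hKc := SchwarzAux.const_of_norm_eq_one hKd hKb (by rw [← hd1_def]; exact hd1eq)
        have hK2z : ∀ z ∈ ball (0:ℂ) 1, z ≠ 0 → K2 z = 0 := by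
          intro z hz hz0
          have h1 := hKrec z
          rw [hKc z hz, ← hd1_def, sub_self] at h1
          exact (mul_eq_zero.mp h1).resolve_left hz0
        have hd2z : d2 = 0 := by
          rw [hd2_def]
          exact SchwarzAux.eq_at_zero_of_punctured hK2cont continuousAt_const hK2z
        rw [hd2z, norm_zero]
        have : Complex.normSq d1 = 1 := by
          rw [← Complex.sq_norm, hd1eq]; norm_num
        rw [this]; norm_num
    exact SchwarzAux.final_bound a d1 d2 (c 2) (c 3) σ μ hσ hμ hν1.le hd1 hV1 hV2 hd2n

  · -- degenerate case ‖a‖ = 1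
    have hconst := SchwarzAux.const_of_norm_eq_one (hdiff 1) hb1
      (by rw [h0val 1, ← ha_def, ← haeq])
    have hh2z : ∀ z ∈ ball (0:ℂ) 1, z ≠ 0 → h 2 z = 0 := by
      intro z hz hz0
      have h1 := hrec 1 z hz
      rw [hconst z hz, h0val 1, ← ha_def] at h1
      have : z * h 2 z = 0 := by linear_combination -h1
      exact (mul_eq_zero.mp this).resolve_left hz0
    have hc2z : c 2 = 0 := by
      rw [← h0val 2]
      exact SchwarzAux.eq_at_zero_of_punctured (hcont 2) continuousAt_const hh2z
    have hh2z' : ∀ z ∈ ball (0:ℂ) 1, h 2 z = 0 := by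
      intro z hz
      by_cases hz0 : z = 0
      · rw [hz0, h0val 2, hc2z]
      · exact hh2z z hz hz0
    have hh3z : ∀ z ∈ ball (0:ℂ) 1, z ≠ 0 → h 3 z = 0 := by
      intro z hz hz0
      have h1 := hrec 2 z hz
      rw [hh2z' z hz, hc2z] at h1
      have : z * h 3 z = 0 := by linear_combination -h1
      exact (mul_eq_zero.mp this).resolve_left hz0
    have hc3z : c 3 = 0 := by
      rw [← h0val 3]
      exact SchwarzAux.eq_at_zero_of_punctured (hcont 3) continuousAt_const hh3z
    have hval : c 3 + (σ:ℂ) * a * c 2 + (μ:ℂ) * a ^ 3 = (μ:ℂ) * a ^ 3 := by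
      rw [hc2z, hc3z]; ring
    rw [hval, norm_mul, norm_pow, Complex.norm_real, haeq,
      Real.norm_of_nonneg hμ0.le]
    norm_num
end
end

section
/- Let ω(z) = Σ_{n≥1} cₙ zⁿ be a Schwarz function. If 2 ≤ |σ| ≤ 4 and μ ≥ (σ² + 8)/12, then |c₃ + σ c₁ c₂ + μ c₁³| ≤ μ. -/
open Complex Metric

set_option maxHeartbeats 4000000

noncomputable section

open Topology Filter

set_option maxHeartbeats 1000000 in
private lemma keyReal (x y u σ μ : ℝ) (hx0 : 0 ≤ x) (hx1 : x ≤ 1)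
    (hy0 : 0 ≤ y) (hy : y ≤ 1 - x^2) (hσ : 4 ≤ σ^2) (hμ : σ^2 + 8 ≤ 12*μ) :
    σ^2*x^2*y^2*(1-x^2)^2 + μ^2*x^6*(1-x^2)^2 + x^2*y^4 + 2*σ*μ*(1-x^2)^2*x^2*u
      - 2*σ*(1-x^2)*y^2*u - 4*μ*(1-x^2)*u^2 + 2*μ*(1-x^2)*x^4*y^2
      ≤ ((1-x^2)*μ - (1-x^2)^2 + y^2)^2 := by
  have hb : 0 ≤ μ - 1 := by nlinarith
  have ht0 : 0 ≤ 1 - x^2 := by nlinarith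
  have ht1 : 1 - x^2 ≤ 1 := by nlinarith
  have hz : y^2 ≤ (1-x^2)^2 := by nlinarith
  rcases eq_or_lt_of_le ht0 with h0 | h0
  · have hyy : y = 0 := le_antisymm (by nlinarith) hy0
    rw [hyy, ← h0]
    ring_nf
    nlinarith [sq_nonneg (x^2*(1-x^2))]
  · have hμ0 : (0:ℝ) < μ := by nlinarith
    set t := 1 - x^2 with ht
    have hH0 : 0 ≤ t^3*(2*(1-t) + (5-4*t)*(μ-1) + (3-2*t)*(μ-1)^2) :=
      mul_nonneg (by positivity) (by nlinarith [sq_nonneg (μ-1)])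
    have hHT : 0 ≤ t^3*(3*(μ-1) + (3-2*t)*(μ-1)^2) :=
      mul_nonneg (by positivity) (by nlinarith [sq_nonneg (μ-1)])
    have hn1 : 0 ≤ 4*(μ-1)*t*((t^2-y^2)*(t^3*(2*(1-t) + (5-4*t)*(μ-1) + (3-2*t)*(μ-1)^2))
        + y^2*(t^3*(3*(μ-1) + (3-2*t)*(μ-1)^2)) + 2*y^2*t^2*(t^2-y^2)) := by
      have h1 : 0 ≤ t^2 - y^2 := by nlinarith
      have h2 : 0 ≤ y^2 := sq_nonneg y
      refine mul_nonneg (by positivity) ?_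
      have := mul_nonneg h1 hH0
      have := mul_nonneg h2 hHT
      nlinarith [mul_nonneg (mul_nonneg h2 (sq_nonneg t)) h1]
    have hn2 : 0 ≤ t^3*(12*μ - σ^2 - 8)*(y^2 + x^2*t*μ)^2 :=
      mul_nonneg (mul_nonneg (by positivity) (by nlinarith)) (sq_nonneg _)
    have hn3 : 0 ≤ t^3*(σ*(μ*t*x^2 - y^2) - 4*μ*u)^2 :=
      mul_nonneg (by positivity) (sq_nonneg _)
    have hid : 4*μ*t^2*(((t*μ - t^2 + y^2)^2) -
        (σ^2*x^2*y^2*t^2 + μ^2*x^6*t^2 + x^2*y^4 + 2*σ*μ*t^2*x^2*u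
          - 2*σ*t*y^2*u - 4*μ*t*u^2 + 2*μ*t*x^4*y^2)) =
        4*(μ-1)*t*((t^2-y^2)*(t^3*(2*(1-t) + (5-4*t)*(μ-1) + (3-2*t)*(μ-1)^2))
          + y^2*(t^3*(3*(μ-1) + (3-2*t)*(μ-1)^2)) + 2*y^2*t^2*(t^2-y^2))
        + t^3*(12*μ - σ^2 - 8)*(y^2 + x^2*t*μ)^2
        + t^3*(σ*(μ*t*x^2 - y^2) - 4*μ*u)^2 := by
      rw [ht]; ring
    have hpos : 0 < 4*μ*t^2 := by positivity
    nlinarith [hid, hn1, hn2, hn3, hpos]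

private lemma mobius_lt {a z : ℂ} (ha : ‖a‖ < 1) (hz : ‖z‖ < 1) :
    ‖(z - a) * (1 - (starRingEnd ℂ) a * z)⁻¹‖ < 1 := by
  have hnsa : Complex.normSq a < 1 := by rw [← Complex.sq_norm]; nlinarith [norm_nonneg a]
  have hnsz : Complex.normSq z < 1 := by rw [← Complex.sq_norm]; nlinarith [norm_nonneg z]
  have hC : ((Complex.normSq (1 - (starRingEnd ℂ) a * z) : ℝ) : ℂ)
      - ((Complex.normSq (z - a) : ℝ) : ℂ)
      = (((1 - Complex.normSq a) * (1 - Complex.normSq z) : ℝ) : ℂ) := by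
    push_cast
    rw [← Complex.mul_conj, ← Complex.mul_conj, ← Complex.mul_conj, ← Complex.mul_conj]
    simp only [map_sub, map_mul, map_one, Complex.conj_conj]
    ring
  have hreal : Complex.normSq (1 - (starRingEnd ℂ) a * z) - Complex.normSq (z - a)
      = (1 - Complex.normSq a) * (1 - Complex.normSq z) := by
    exact_mod_cast hC
  have hlt : Complex.normSq (z - a) < Complex.normSq (1 - (starRingEnd ℂ) a * z) := by
    nlinarith [hreal]
  have habs : ‖z - a‖ < ‖1 - (starRingEnd ℂ) a * z‖ := by
    apply lt_of_pow_lt_pow_left₀ 2 (norm_nonneg _)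
    rw [Complex.sq_norm, Complex.sq_norm]; exact hlt
  have hdpos : 0 < ‖1 - (starRingEnd ℂ) a * z‖ :=
    lt_of_le_of_lt (norm_nonneg _) habs
  rw [norm_mul, norm_inv, ← div_eq_mul_inv, div_lt_one hdpos]
  exact habs

theorem stmt_3 (w : ℂ → ℂ) (c : ℕ → ℂ) (σ μ : ℝ)
    (hw : IsSchwarz w) (hc0 : c 0 = 0)
    (hcsum : ∀ z ∈ ball (0:ℂ) 1, HasSum (fun n => c n * z ^ n) (w z))
    (hσ : 2 ≤ |σ| ∧ |σ| ≤ 4) (hμ : (σ ^ 2 + 8) / 12 ≤ μ) :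
    ‖c 3 + (σ : ℂ) * c 1 * c 2 + (μ : ℂ) * c 1 ^ 3‖ ≤ μ := by
  obtain ⟨hwd, hw0, hwm⟩ := hw
  have hball : ball (0:ℂ) 1 ∈ 𝓝 (0:ℂ) := ball_mem_nhds _ one_pos
  have hσ4 : 4 ≤ σ^2 := by nlinarith [hσ.1, _root_.sq_abs σ, abs_nonneg σ]
  have hμ12 : σ^2 + 8 ≤ 12*μ := by nlinarith
  have hμ1 : (1:ℝ) ≤ μ := by nlinarith
  set p := FormalMultilinearSeries.ofScalars ℂ c with hpdef
  have hcoeff : ∀ n, p.coeff n = c n := by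
    intro n
    show p n (fun _ => 1) = c n
    rw [hpdef, FormalMultilinearSeries.ofScalars_apply_eq]
    simp
  have hp : HasFPowerSeriesAt w p 0 := by
    rw [hasFPowerSeriesAt_iff]
    filter_upwards [hball] with z hz
    have h2 : (fun n => z ^ n • p.coeff n) = fun n => c n * z ^ n := by
      funext n; rw [hcoeff, smul_eq_mul, mul_comm]
    rw [zero_add, h2]
    exact hcsum z hz
  set g := dslope w 0 with hgdef
  have hgd : DifferentiableOn ℂ g (ball (0:ℂ) 1) :=
    (Complex.differentiableOn_dslope hball).mpr hwd
  have hgp : HasFPowerSeriesAt g p.fslope 0 := hp.has_fpower_series_dslope_fslope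
  have hg1p : HasFPowerSeriesAt (dslope g 0) p.fslope.fslope 0 :=
    hgp.has_fpower_series_dslope_fslope
  have e2 : (p.fslope 1 fun _ => 1) = c 2 := by
    rw [show (p.fslope 1 fun _ => 1) = p.fslope.coeff 1 from rfl,
      FormalMultilinearSeries.coeff_fslope, hcoeff]
  have e3 : (p.fslope.fslope 1 fun _ => 1) = c 3 := by
    rw [show (p.fslope.fslope 1 fun _ => 1) = p.fslope.fslope.coeff 1 from rfl,
      FormalMultilinearSeries.coeff_fslope, FormalMultilinearSeries.coeff_fslope, hcoeff]
  have hg0 : g 0 = c 1 := by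
    rw [hgdef, dslope_same, hp.deriv,
      show (p 1 fun _ => 1) = p.coeff 1 from rfl, hcoeff]
  have hderivg : deriv g 0 = c 2 := hgp.deriv.trans e2
  have hwmaps : Set.MapsTo w (ball (0:ℂ) 1) (ball (w 0) 1) := by
    rw [hw0]; exact fun z hz => hwm z hz
  have hg_le : ∀ z ∈ ball (0:ℂ) 1, ‖g z‖ ≤ 1 := by
    intro z hz
    have := Complex.norm_dslope_le_div_of_mapsTo_ball hwd (hwmaps.mono_right ball_subset_closedBall) hz
    simpa [hgdef] using this
  by_cases hbig : ∃ z₀ ∈ ball (0:ℂ) 1, 1 ≤ ‖g z₀‖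
  · -- g is constant with |c 1| ≤ 1, c 2 = c 3 = 0
    obtain ⟨z₀, hz₀, hz₀1⟩ := hbig
    have hmax : IsMaxOn (norm ∘ g) (ball (0:ℂ) 1) z₀ := by
      intro z hz
      simp only [Function.comp_apply, Set.mem_setOf_eq]
      exact le_trans (hg_le z hz) hz₀1
    have hconst : Set.EqOn g (Function.const ℂ (g z₀)) (ball (0:ℂ) 1) :=
      Complex.eqOn_of_isPreconnected_of_isMaxOn_norm (convex_ball (0:ℂ) 1).isPreconnected
        isOpen_ball hgd hz₀ hmax
    have hgconst : ∀ᶠ z in 𝓝 (0:ℂ), g z = g z₀ := by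
      filter_upwards [hball] with z hz using hconst hz
    have hc2 : c 2 = 0 := by
      have hd : deriv g 0 = deriv (fun _ : ℂ => g z₀) 0 :=
        Filter.EventuallyEq.deriv_eq hgconst
      rw [← hderivg, hd, deriv_const]
    have hc3 : c 3 = 0 := by
      have hg1const : ∀ᶠ z in 𝓝 (0:ℂ), dslope g 0 z = 0 := by
        filter_upwards [hball] with z hz
        rcases eq_or_ne z 0 with rfl | hne
        · rw [dslope_same, hderivg, hc2]
        · rw [dslope_of_ne _ hne, slope]
          rw [hconst hz, hconst (mem_ball_self one_pos)]
          simp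
      have hd : deriv (dslope g 0) 0 = deriv (fun _ : ℂ => (0:ℂ)) 0 :=
        Filter.EventuallyEq.deriv_eq hg1const
      rw [← hg1p.deriv.trans e3, hd, deriv_const]
    have hc1 : ‖c 1‖ ≤ 1 := by
      have := hg_le 0 (mem_ball_self one_pos); rwa [hg0] at this
    rw [hc2, hc3]
    have habs : ‖0 + (σ:ℂ) * c 1 * 0 + (μ:ℂ) * c 1^3‖
        = μ * ‖c 1‖^3 := by
      rw [mul_zero, zero_add, zero_add, norm_mul, norm_pow, Complex.norm_real, Real.norm_eq_abs,
        abs_of_pos (by linarith)]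
    rw [habs]
    nlinarith [pow_le_one₀ (norm_nonneg (c 1)) hc1 (n := 3),
      norm_nonneg (c 1)]
  · push_neg at hbig
    have hsmall : ∀ z ∈ ball (0:ℂ) 1, ‖g z‖ < 1 := hbig
    set a := c 1 with hadef
    set x := ‖a‖ with hxdef
    have hx0 : 0 ≤ x := norm_nonneg a
    have ha : x < 1 := by
      have := hsmall 0 (mem_ball_self one_pos); rwa [hg0] at this
    set t : ℝ := 1 - x^2 with htdef
    have ht0 : 0 < t := by nlinarith
    have hTne : ((t:ℝ):ℂ) ≠ 0 := by
      simpa using ne_of_gt ht0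
    have hca : (starRingEnd ℂ) a * a = ((x^2 : ℝ) : ℂ) := by
      rw [mul_comm, Complex.mul_conj]
      norm_cast
      exact (Complex.sq_norm a).symm
    have hden0 : (1 : ℂ) - (starRingEnd ℂ) a * a = ((t:ℝ):ℂ) := by
      rw [hca, htdef]; push_cast; ring
    have hden : ∀ z ∈ ball (0:ℂ) 1, (1 - (starRingEnd ℂ) a * g z) ≠ 0 := by
      intro z hz h
      have h1 : ‖(starRingEnd ℂ) a * g z‖ < 1 := by
        rw [norm_mul, Complex.norm_conj]
        nlinarith [norm_nonneg (g z), hsmall z hz]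
      rw [sub_eq_zero] at h
      rw [← h] at h1
      simp at h1
    set h := fun z => (g z - a) * (1 - (starRingEnd ℂ) a * g z)⁻¹ with hhdef
    have hhd : DifferentiableOn ℂ h (ball (0:ℂ) 1) := by
      apply DifferentiableOn.mul (hgd.sub_const a)
      exact DifferentiableOn.inv
        ((differentiableOn_const _).sub ((differentiableOn_const _).mul hgd)) hden
    have hh0 : h 0 = 0 := by
      rw [hhdef]; simp [hg0]
    have hhmaps : Set.MapsTo h (ball (0:ℂ) 1) (ball (h 0) 1) := by
      intro z hz
      rw [hh0, mem_ball_zero_iff]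
      exact mobius_lt ha (hsmall z hz)
    have hk_le : ∀ z ∈ ball (0:ℂ) 1, ‖dslope h 0 z‖ ≤ 1 := by
      intro z hz
      have := Complex.norm_dslope_le_div_of_mapsTo_ball hhd (hhmaps.mono_right ball_subset_closedBall) hz
      simpa using this
    have hkdiff : DifferentiableOn ℂ (dslope h 0) (ball (0:ℂ) 1) :=
      (Complex.differentiableOn_dslope hball).mpr hhd
    -- derivative facts
    have hgderiv : HasDerivAt g (c 2) 0 := by
      have hd := hgp.hasDerivAt; rwa [e2] at hd
    have hvderiv : HasDerivAt (fun z => (1 - (starRingEnd ℂ) a * g z)⁻¹)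
        ((starRingEnd ℂ) a * c 2 / ((t:ℝ):ℂ)^2) 0 := by
      have h1 : HasDerivAt (fun z => 1 - (starRingEnd ℂ) a * g z)
          (-((starRingEnd ℂ) a * c 2)) 0 := by
        simpa using ((hgderiv.const_mul ((starRingEnd ℂ) a)).const_sub 1)
      have h2 := h1.inv (by rw [hg0, hden0]; exact hTne)
      refine h2.congr_deriv ?_
      rw [hg0, hden0]
      ring
    have hv0 : (1 - (starRingEnd ℂ) a * g 0)⁻¹ = ((t:ℝ):ℂ)⁻¹ := by
      rw [hg0, hden0]
    set E1 : ℂ := c 2 / ((t:ℝ):ℂ) with hE1def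
    set E2 : ℂ := c 3 / ((t:ℝ):ℂ) + (starRingEnd ℂ) a * (c 2)^2 / ((t:ℝ):ℂ)^2 with hE2def
    have hhderiv : HasDerivAt h E1 0 := by
      have hm := (hgderiv.sub_const a).mul hvderiv
      have hval : c 2 * (1 - (starRingEnd ℂ) a * g 0)⁻¹
          + (g 0 - a) * ((starRingEnd ℂ) a * c 2 / ((t:ℝ):ℂ)^2) = E1 := by
        rw [hg0, hden0, hE1def]; ring
      rw [← hval]
      exact hm
    have hk0 : dslope h 0 0 = E1 := by rw [dslope_same, hhderiv.deriv]
    have hg1deriv : HasDerivAt (dslope g 0) (c 3) 0 := by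
      have hd := hg1p.hasDerivAt; rwa [e3] at hd
    have hg10 : dslope g 0 0 = c 2 := by rw [dslope_same, hderivg]
    have hkeq : Set.EqOn (dslope h 0)
        (fun z => dslope g 0 z * (1 - (starRingEnd ℂ) a * g z)⁻¹) (ball (0:ℂ) 1) := by
      intro z hz
      rcases eq_or_ne z 0 with rfl | hne
      · show dslope h 0 0 = dslope g 0 0 * (1 - (starRingEnd ℂ) a * g 0)⁻¹
        rw [hk0, hg10, hv0, hE1def, div_eq_mul_inv]
      · show dslope h 0 z = dslope g 0 z * (1 - (starRingEnd ℂ) a * g z)⁻¹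
        rw [dslope_of_ne _ hne, dslope_of_ne _ hne, slope_def_field, slope_def_field,
          hh0, hg0, sub_zero, sub_zero]
        show (g z - a) * (1 - (starRingEnd ℂ) a * g z)⁻¹ / z = _
        rw [mul_div_right_comm]
    have hkd : deriv (dslope h 0) 0 = E2 := by
      have hev : dslope h 0 =ᶠ[𝓝 (0:ℂ)]
          (fun z => dslope g 0 z * (1 - (starRingEnd ℂ) a * g z)⁻¹) := by
        filter_upwards [hball] with z hz using hkeq hz
      rw [Filter.EventuallyEq.deriv_eq hev]
      have hm : HasDerivAt (fun z => dslope g 0 z * (1 - (starRingEnd ℂ) a * g z)⁻¹) _ 0 :=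
        hg1deriv.mul hvderiv
      rw [hm.deriv, hg10, hg0, hden0, hE2def]
      field_simp [hTne]
    have hE1abs : ‖E1‖ = ‖c 2‖ / t := by
      rw [hE1def, norm_div, Complex.norm_real, Real.norm_eq_abs, abs_of_pos ht0]
    have hE1le : ‖E1‖ ≤ 1 := by
      rw [← hk0]; exact hk_le 0 (mem_ball_self one_pos)
    have hEbound : ‖E2‖ ≤ 1 - ‖E1‖^2 := by
      by_cases hkbig : ∃ z₀ ∈ ball (0:ℂ) 1, 1 ≤ ‖dslope h 0 z₀‖
      · obtain ⟨z₀, hz₀, h1⟩ := hkbig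
        have hmax : IsMaxOn (norm ∘ dslope h 0) (ball (0:ℂ) 1) z₀ := by
          intro z hz
          simp only [Function.comp_apply, Set.mem_setOf_eq]
          exact le_trans (hk_le z hz) h1
        have hconst := Complex.eqOn_of_isPreconnected_of_isMaxOn_norm
          (convex_ball (0:ℂ) 1).isPreconnected isOpen_ball hkdiff hz₀ hmax
        have hd : deriv (dslope h 0) 0 = deriv (fun _ : ℂ => dslope h 0 z₀) 0 :=
          Filter.EventuallyEq.deriv_eq (by filter_upwards [hball] with z hz using hconst hz)
        have hE20 : E2 = 0 := by rw [← hkd, hd, deriv_const]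
        rw [hE20, norm_zero]
        nlinarith [hE1le, norm_nonneg E1]
      · push_neg at hkbig
        have hE1lt : ‖E1‖ < 1 := by
          rw [← hk0]; exact hkbig 0 (mem_ball_self one_pos)
        have hTE : (1:ℂ) - (starRingEnd ℂ) E1 * E1 = ((1 - ‖E1‖^2 : ℝ):ℂ) := by
          have h1 : (starRingEnd ℂ) E1 * E1 = ((‖E1‖^2 : ℝ):ℂ) := by
            rw [mul_comm, Complex.mul_conj]
            norm_cast
            exact (Complex.sq_norm E1).symm
          rw [h1]
          push_cast
          ring
        have hTEpos : (0:ℝ) < 1 - ‖E1‖^2 := by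
          nlinarith [norm_nonneg E1]
        have hTEne : ((1 - ‖E1‖^2 : ℝ):ℂ) ≠ 0 :=
          Complex.ofReal_ne_zero.mpr (ne_of_gt hTEpos)
        have hdenm : ∀ z ∈ ball (0:ℂ) 1, (1 - (starRingEnd ℂ) E1 * dslope h 0 z) ≠ 0 := by
          intro z hz hcontra
          have h1 : ‖(starRingEnd ℂ) E1 * dslope h 0 z‖ < 1 := by
            rw [norm_mul, Complex.norm_conj]
            nlinarith [norm_nonneg (dslope h 0 z), hkbig z hz, norm_nonneg E1]
          rw [sub_eq_zero] at hcontra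
          rw [← hcontra] at h1
          simp at h1
        set m := fun z => (dslope h 0 z - E1) * (1 - (starRingEnd ℂ) E1 * dslope h 0 z)⁻¹
          with hmdef
        have hmd : DifferentiableOn ℂ m (ball (0:ℂ) 1) := by
          apply DifferentiableOn.mul (hkdiff.sub_const E1)
          exact DifferentiableOn.inv
            ((differentiableOn_const _).sub ((differentiableOn_const _).mul hkdiff)) hdenm
        have hm0 : m 0 = 0 := by
          rw [hmdef]
          show (dslope h 0 0 - E1) * _ = 0
          rw [hk0, sub_self, zero_mul]
        have hmmaps : Set.MapsTo m (ball (0:ℂ) 1) (ball (0:ℂ) 1) := by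
          intro z hz
          rw [mem_ball_zero_iff]
          exact mobius_lt hE1lt (hkbig z hz)
        have hkAt : DifferentiableAt ℂ (dslope h 0) 0 := hkdiff.differentiableAt hball
        have hkHD : HasDerivAt (dslope h 0) E2 0 := by
          have h2 := hkAt.hasDerivAt; rwa [hkd] at h2
        have hmderiv : HasDerivAt m (E2 * ((1 - ‖E1‖^2 : ℝ):ℂ)⁻¹) 0 := by
          have h1 : HasDerivAt (fun z => 1 - (starRingEnd ℂ) E1 * dslope h 0 z)
              (-((starRingEnd ℂ) E1 * E2)) 0 := by
            simpa using ((hkHD.const_mul ((starRingEnd ℂ) E1)).const_sub 1)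
          have h2 := h1.inv (by rw [hk0, hTE]; exact hTEne)
          have h3 := (hkHD.sub_const E1).mul h2
          have hval : E2 * (1 - (starRingEnd ℂ) E1 * dslope h 0 0)⁻¹
              + (dslope h 0 0 - E1) * (-(-((starRingEnd ℂ) E1 * E2))
                / (1 - (starRingEnd ℂ) E1 * dslope h 0 0)^2)
              = E2 * ((1 - ‖E1‖^2 : ℝ):ℂ)⁻¹ := by
            rw [hk0, hTE]; ring
          rw [← hval]
          exact h3
        have habs1 := Complex.norm_deriv_le_one_of_mapsTo_ball hmd
            (by rw [hm0]; exact hmmaps.mono_right ball_subset_closedBall) one_pos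
        rw [hmderiv.deriv, norm_mul, norm_inv, Complex.norm_real, Real.norm_eq_abs, abs_of_pos hTEpos,
          ← div_eq_mul_inv] at habs1
        exact (div_le_one hTEpos).mp habs1
    -- final assembly
    set y := ‖c 2‖ with hydef
    have hy0 : 0 ≤ y := norm_nonneg _
    have hyt : y ≤ t := by
      have h1 := hE1le
      rw [hE1abs] at h1
      exact (div_le_one ht0).mp h1
    set u : ℝ := (a*a*(starRingEnd ℂ) (c 2)).re with hudef
    set P : ℂ := ((t:ℝ):ℂ)*((σ:ℂ)*a*c 2 + (μ:ℂ)*(a*a*a)) - (starRingEnd ℂ) a*(c 2 * c 2)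
      with hPdef
    have hns : Complex.normSq P = σ^2*(x^2)*(y^2)*t^2 + μ^2*(x^2)^3*t^2 + (x^2)*(y^2)^2
        + 2*σ*μ*t^2*(x^2)*u - 2*σ*t*(y^2)*u - 4*μ*t*u^2 + 2*μ*t*(x^2)^2*(y^2) := by
      have hxx : x^2 = Complex.normSq a := Complex.sq_norm a
      have hyy : y^2 = Complex.normSq (c 2) := Complex.sq_norm _
      rw [hxx, hyy, hPdef, hudef]
      simp only [Complex.normSq_apply, Complex.mul_re, Complex.mul_im, Complex.sub_re,
        Complex.sub_im, Complex.add_re, Complex.add_im, Complex.ofReal_re, Complex.ofReal_im,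
        Complex.conj_re, Complex.conj_im]
      ring
    have hP2 : ‖P‖^2 ≤ ((1-x^2)*μ - (1-x^2)^2 + y^2)^2 := by
      have hk := keyReal x y u σ μ hx0 (le_of_lt ha) hy0 (by rw [← htdef]; exact hyt) hσ4 hμ12
      rw [Complex.sq_norm, hns]
      have heq : σ^2*(x^2)*(y^2)*t^2 + μ^2*(x^2)^3*t^2 + (x^2)*(y^2)^2
          + 2*σ*μ*t^2*(x^2)*u - 2*σ*t*(y^2)*u - 4*μ*t*u^2 + 2*μ*t*(x^2)^2*(y^2)
          = σ^2*x^2*y^2*(1-x^2)^2 + μ^2*x^6*(1-x^2)^2 + x^2*y^4 + 2*σ*μ*(1-x^2)^2*x^2*u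
            - 2*σ*(1-x^2)*y^2*u - 4*μ*(1-x^2)*u^2 + 2*μ*(1-x^2)*x^4*y^2 := by
        rw [htdef]; ring
      rw [heq]
      exact hk
    have hM0 : 0 ≤ (1-x^2)*μ - (1-x^2)^2 + y^2 := by nlinarith [sq_nonneg y, ht0, hx0]
    have habsP : ‖P‖ ≤ (1-x^2)*μ - (1-x^2)^2 + y^2 := by
      nlinarith [hP2, norm_nonneg P, hM0]
    have hc3eq : c 3 = E2 * ((t:ℝ):ℂ) - (starRingEnd ℂ) a * (c 2)^2 / ((t:ℝ):ℂ) := by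
      rw [hE2def]; field_simp; ring
    have hsplit : c 3 + (σ:ℂ)*c 1*c 2 + (μ:ℂ)*c 1^3
        = E2*((t:ℝ):ℂ) + P / ((t:ℝ):ℂ) := by
      rw [hc3eq, hPdef]
      field_simp
      ring
    rw [hsplit]
    have hE2abs : ‖E2 * ((t:ℝ):ℂ)‖ ≤ (1 - (y/t)^2) * t := by
      rw [norm_mul, Complex.norm_real, Real.norm_eq_abs, abs_of_pos ht0]
      apply mul_le_mul_of_nonneg_right _ (le_of_lt ht0)
      rw [hE1abs] at hEbound
      exact hEbound
    have hPdiv : ‖P / ((t:ℝ):ℂ)‖ ≤ ((1-x^2)*μ - (1-x^2)^2 + y^2)/t := by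
      rw [norm_div, Complex.norm_real, Real.norm_eq_abs, abs_of_pos ht0]
      exact (div_le_div_iff_of_pos_right ht0).mpr habsP
    calc ‖E2*((t:ℝ):ℂ) + P/((t:ℝ):ℂ)‖
        ≤ ‖E2*((t:ℝ):ℂ)‖ + ‖P/((t:ℝ):ℂ)‖ := norm_add_le _ _
      _ ≤ (1-(y/t)^2)*t + ((1-x^2)*μ - (1-x^2)^2 + y^2)/t := add_le_add hE2abs hPdiv
      _ = μ := by
          rw [← htdef]
          field_simp
          ring
end
end

section
/- Let f ∈ S*(φ) with φ(z) = 1 + B₁z + B₂z² + ..., B₁ > 0. If |B₂ - 2B₁²| ≥ B₁, then |Γ₁² - Γ₂²| ≤ B₁²/4 + (2B₁² - B₂)²/16, where Γ₁, Γ₂ are the first two logarithmic coefficients of the inverse function f⁻¹. The bound is sharp. -/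
open Complex Metric

noncomputable section

/-! ### Auxiliary lemmas -/

open FormalMultilinearSeries Filter
open scoped ENNReal NNReal Nat

lemma memE_iff {y : ℂ} : y ∈ Metric.eball (0:ℂ) 1 ↔ y ∈ ball (0:ℂ) 1 := by
  rw [show (1 : ℝ≥0∞) = ((1:NNReal) : ℝ≥0∞) by norm_num, Metric.emetric_ball_nnreal]
  norm_num

lemma atomD {g : ℂ → ℂ} {s : Set ℂ} (hA : AnalyticOnNhd ℂ g s) {z : ℂ} (hz : z ∈ s) :
    HasDerivAt g (deriv g z) z :=
  (hA z hz).differentiableAt.hasDerivAt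

lemma derivStep {u v u' v' : ℂ → ℂ} (h : Set.EqOn u v (ball (0:ℂ) 1))
    (hu : ∀ z ∈ ball (0:ℂ) 1, HasDerivAt u (u' z) z)
    (hv : ∀ z ∈ ball (0:ℂ) 1, HasDerivAt v (v' z) z) :
    Set.EqOn u' v' (ball (0:ℂ) 1) := fun z hz => by
  have hd : deriv u z = deriv v z :=
    Filter.EventuallyEq.deriv_eq (Filter.eventuallyEq_of_mem (isOpen_ball.mem_nhds hz) h)
  rwa [(hu z hz).deriv, (hv z hz).deriv] at hd

/-- From a power-series representation by sums on the unit ball, get a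
`HasFPowerSeriesOnBall` statement. -/
lemma hasFPSOB_of_hasSum {f : ℂ → ℂ} {a : ℕ → ℂ}
    (h : ∀ z ∈ ball (0:ℂ) 1, HasSum (fun n => a n * z ^ n) (f z)) :
    HasFPowerSeriesOnBall f (ofScalars ℂ a) 0 1 where
  r_le := by
    apply ENNReal.le_of_forall_nnreal_lt
    intro r hr
    have hr1 : (r:ℝ) < 1 := by exact_mod_cast hr
    have hz : ((r:ℝ):ℂ) ∈ ball (0:ℂ) 1 := by
      rw [mem_ball_zero_iff, Complex.norm_real, Real.norm_eq_abs,
        _root_.abs_of_nonneg r.coe_nonneg]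
      exact hr1
    have hsum := (h _ hz).summable
    have ht : Tendsto (fun n => ‖ofScalars ℂ a n‖ * (r:ℝ) ^ n) atTop (nhds 0) := by
      have h0 : Tendsto (fun n => ‖a n * ((r:ℝ):ℂ) ^ n‖) atTop (nhds 0) :=
        (tendsto_zero_iff_norm_tendsto_zero.mp hsum.tendsto_atTop_zero)
      have he : (fun n => ‖ofScalars ℂ a n‖ * (r:ℝ) ^ n) =
          fun n => ‖a n * ((r:ℝ):ℂ) ^ n‖ := by
        funext n
        rw [ofScalars_norm, norm_mul, norm_pow, Complex.norm_real, Real.norm_eq_abs,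
          _root_.abs_of_nonneg r.coe_nonneg]
      rw [he]; exact h0
    exact (ofScalars ℂ a).le_radius_of_tendsto ht
  r_pos := by norm_num
  hasSum := by
    intro y hy
    have hy' : y ∈ ball (0:ℂ) 1 := memE_iff.mp hy
    have he : (fun n => ofScalars ℂ a n fun _ => y) = fun n => a n * y ^ n := by
      funext n; rw [ofScalars_apply_eq, smul_eq_mul]
    rw [he, zero_add]
    exact h y hy'

lemma iteratedDeriv_of_hasFPSOB {f : ℂ → ℂ} {p : FormalMultilinearSeries ℂ ℂ ℂ}
    (h : HasFPowerSeriesOnBall f p 0 1) (n : ℕ) :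
    iteratedDeriv n f 0 = (n.factorial : ℂ) * (p n fun _ => 1) := by
  have h1 := h.factorial_smul (1:ℂ) n
  rw [iteratedDeriv_eq_iteratedFDeriv, ← h1, nsmul_eq_mul]

lemma iteratedDeriv_of_hasSum {f : ℂ → ℂ} {a : ℕ → ℂ}
    (h : ∀ z ∈ ball (0:ℂ) 1, HasSum (fun n => a n * z ^ n) (f z)) (n : ℕ) :
    iteratedDeriv n f 0 = (n.factorial : ℂ) * a n := by
  rw [iteratedDeriv_of_hasFPSOB (hasFPSOB_of_hasSum h) n,
    show (ofScalars ℂ a n fun _ => (1:ℂ)) = a n from by rw [ofScalars_apply_eq]; simp]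

/-- A function complex-differentiable on the unit ball is the sum of its Taylor series there. -/
lemma hasSum_of_differentiableOn {f : ℂ → ℂ}
    (hd : DifferentiableOn ℂ f (ball (0:ℂ) 1)) :
    ∀ z ∈ ball (0:ℂ) 1,
      HasSum (fun n => (iteratedDeriv n f 0 / n.factorial) * z ^ n) (f z) := by
  intro z hz
  rw [mem_ball_zero_iff] at hz
  set r : NNReal := ⟨(‖z‖ + 1) / 2, by positivity⟩ with hrdef
  have hrz : ‖z‖ < (r:ℝ) := by
    show ‖z‖ < (‖z‖ + 1) / 2
    linarith
  have hr1 : (r:ℝ) < 1 := by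
    show (‖z‖ + 1) / 2 < 1
    linarith
  have hr0 : 0 < r := by
    rw [← NNReal.coe_pos]
    show (0:ℝ) < (‖z‖ + 1) / 2
    positivity
  have hsub : closedBall (0:ℂ) r ⊆ ball (0:ℂ) 1 := by
    intro x hx
    rw [mem_closedBall_zero_iff] at hx
    rw [mem_ball_zero_iff]
    exact lt_of_le_of_lt hx hr1
  have hp : HasFPowerSeriesOnBall f (cauchyPowerSeries f 0 r) 0 r :=
    (hd.mono hsub).hasFPowerSeriesOnBall hr0
  have hzm : z ∈ Metric.eball (0:ℂ) r := by
    rw [Metric.emetric_ball_nnreal, mem_ball_zero_iff]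
    exact hrz
  have hs := hp.hasSum hzm
  simp only [zero_add] at hs
  have hfac : ∀ n : ℕ, (n.factorial : ℂ) ≠ 0 := fun n => by
    exact_mod_cast n.factorial_ne_zero
  have hcoeff : ∀ n, (cauchyPowerSeries f 0 r n fun _ => z)
      = (iteratedDeriv n f 0 / n.factorial) * z ^ n := by
    intro n
    have h1 := hp.factorial_smul (1:ℂ) n
    rw [← iteratedDeriv_eq_iteratedFDeriv, nsmul_eq_mul] at h1
    have h2 : (cauchyPowerSeries f 0 r n fun _ => z)
        = z ^ n • (cauchyPowerSeries f 0 r).coeff n := apply_eq_pow_smul_coeff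
    have h3 : (cauchyPowerSeries f 0 r n fun _ => (1:ℂ))
        = (1:ℂ) ^ n • (cauchyPowerSeries f 0 r).coeff n := apply_eq_pow_smul_coeff
    simp only [one_pow, one_smul] at h3
    rw [h2, ← h3, smul_eq_mul, ← h1,
      mul_comm ((n.factorial:ℂ)) _, mul_div_assoc, div_self (hfac n), mul_one, mul_comm]
  have he : (fun n => cauchyPowerSeries f 0 r n fun _ => z)
      = fun n => (iteratedDeriv n f 0 / n.factorial) * z ^ n := funext hcoeff
  rw [← he]
  exact hs

/-- Schwarz lemma and Schwarz–Pick at the origin for the coefficients of a Schwarz function. -/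
lemma schwarz_coeff {w : ℂ → ℂ} (hw : IsSchwarz w) :
    ‖deriv w 0‖ ≤ 1 ∧
      ‖deriv (deriv w) 0‖ ≤ 2 * (1 - ‖deriv w 0‖ ^ 2) := by
  obtain ⟨hd, h0, hmaps⟩ := hw
  have h01 : (0:ℂ) ∈ ball (0:ℂ) 1 := mem_ball_self one_pos
  have hmaps' : Set.MapsTo w (ball (0:ℂ) 1) (ball (w 0) 1) := by
    rw [h0]; exact fun z hz => hmaps z hz
  set g := dslope w 0 with hgdef
  have hgd : DifferentiableOn ℂ g (ball (0:ℂ) 1) :=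
    (Complex.differentiableOn_dslope (ball_mem_nhds _ one_pos)).mpr hd
  have hgle : ∀ z ∈ ball (0:ℂ) 1, ‖g z‖ ≤ 1 := fun z hz => by
    simpa using Complex.norm_dslope_le_div_of_mapsTo_ball hd (hmaps'.mono_right ball_subset_closedBall) hz
  have hg0 : g 0 = deriv w 0 := dslope_same w 0
  have hgA : AnalyticOnNhd ℂ g (ball (0:ℂ) 1) := hgd.analyticOnNhd isOpen_ball
  -- the second derivative of w at 0 equals twice deriv g 0
  have hwz : w = fun z => z * g z := by
    funext z
    have := sub_smul_dslope w 0 z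
    rw [h0, sub_zero, sub_zero, smul_eq_mul] at this
    rw [← this]
  have hdw : Set.EqOn (deriv w) (fun z => g z + z * deriv g z) (ball (0:ℂ) 1) := by
    intro z hz
    have h1 : HasDerivAt (fun z => z * g z) (1 * g z + z * deriv g z) z :=
      (hasDerivAt_id z).mul (atomD hgA hz)
    rw [hwz, h1.deriv]; ring
  have hddw : deriv (deriv w) 0 = 2 * deriv g 0 := by
    have h2 : HasDerivAt (fun z => g z + z * deriv g z)
        (deriv g 0 + (1 * deriv g 0 + 0 * deriv (deriv g) 0)) 0 :=
      (atomD hgA h01).add ((hasDerivAt_id 0).mul (atomD hgA.deriv h01))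
    have h3 : deriv (deriv w) 0 = deriv (fun z => g z + z * deriv g z) 0 :=
      Filter.EventuallyEq.deriv_eq
        (Filter.eventuallyEq_of_mem (isOpen_ball.mem_nhds h01) hdw)
    rw [h3, h2.deriv]; ring
  have habs1 : ‖deriv w 0‖ ≤ 1 := by
    rw [← hg0]; exact hgle 0 h01
  refine ⟨habs1, ?_⟩
  rw [hddw, ← hg0]
  -- suffices: ‖deriv g 0‖ ≤ 1 - ‖g 0‖²
  suffices h : ‖deriv g 0‖ ≤ 1 - ‖g 0‖ ^ 2 by
    rw [norm_mul, show ‖(2:ℂ)‖ = 2 by norm_num]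
    nlinarith [norm_nonneg (deriv g 0)]
  by_cases hc : ∃ z ∈ ball (0:ℂ) 1, 1 ≤ ‖g z‖
  · -- the function g has modulus 1 somewhere, hence is constant
    obtain ⟨z0, hz0, hge⟩ := hc
    have heq1 : ‖g z0‖ = 1 := le_antisymm (hgle _ hz0) hge
    have hmax : IsMaxOn (norm ∘ g) (ball (0:ℂ) 1) z0 := by
      intro z hz
      simp only [Function.comp_apply, Set.mem_setOf_eq, heq1]
      exact hgle z hz
    have hconst := Complex.eqOn_of_isPreconnected_of_isMaxOn_norm
      (convex_ball (0:ℂ) 1).isPreconnected isOpen_ball hgd hz0 hmax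
    have hdg0 : deriv g 0 = 0 := by
      have h5 : deriv g 0 = deriv (Function.const ℂ (g z0)) 0 :=
        Filter.EventuallyEq.deriv_eq
          (Filter.eventuallyEq_of_mem (isOpen_ball.mem_nhds h01) hconst)
      rw [h5]; exact deriv_const 0 (g z0)
    have : g 0 = g z0 := hconst h01
    rw [hdg0]
    simp only [norm_zero]
    rw [show ‖g 0‖ = 1 by rw [this, heq1]]
    norm_num
  · push_neg at hc
    set A := g 0 with hA
    have hA1 : ‖A‖ < 1 := hc 0 h01
    have hAd : ∀ b : ℂ, ‖b‖ < 1 →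
        Complex.normSq (1 - (starRingEnd ℂ) A * b) - Complex.normSq (A - b)
          = (1 - Complex.normSq A) * (1 - Complex.normSq b) := by
      intro b hb
      have key : (1 - (starRingEnd ℂ) A * b) * (starRingEnd ℂ) (1 - (starRingEnd ℂ) A * b)
          - (A - b) * (starRingEnd ℂ) (A - b)
          = (1 - A * (starRingEnd ℂ) A) * (1 - b * (starRingEnd ℂ) b) := by
        simp only [map_sub, map_mul, map_one, Complex.conj_conj]
        ring
      rw [Complex.mul_conj, Complex.mul_conj, Complex.mul_conj, Complex.mul_conj] at key
      exact_mod_cast key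
    have hden : ∀ z ∈ ball (0:ℂ) 1, 1 - (starRingEnd ℂ) A * g z ≠ 0 := by
      intro z hz h
      have hgz := hc z hz
      have h1 : (starRingEnd ℂ) A * g z = 1 := by
        have := sub_eq_zero.mp h; exact this.symm
      have : ‖(starRingEnd ℂ) A * g z‖ < 1 := by
        rw [norm_mul, RCLike.norm_conj]
        nlinarith [norm_nonneg A, norm_nonneg (g z)]
      rw [h1] at this; simp at this
    set h := fun z => (A - g z) / (1 - (starRingEnd ℂ) A * g z) with hhdef
    have hh0 : h 0 = 0 := by simp [hhdef, ← hA]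
    have hhd : DifferentiableOn ℂ h (ball (0:ℂ) 1) := by
      apply DifferentiableOn.div
      · exact (differentiableOn_const A).sub hgd
      · exact (differentiableOn_const 1).sub ((differentiableOn_const _).mul hgd)
      · exact hden
    have hhm : Set.MapsTo h (ball (0:ℂ) 1) (ball (0:ℂ) 1) := by
      intro z hz
      rw [mem_ball_zero_iff, hhdef]
      have hgz := hc z hz
      have hpos : 0 < ‖1 - (starRingEnd ℂ) A * g z‖ := norm_pos_iff.mpr (hden z hz)
      rw [norm_div, div_lt_one hpos]
      have hkey := hAd (g z) hgz
      have hA2 : Complex.normSq A < 1 := by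
        rw [Complex.normSq_eq_norm_sq]; nlinarith [norm_nonneg A]
      have hb2 : Complex.normSq (g z) < 1 := by
        rw [Complex.normSq_eq_norm_sq]; nlinarith [norm_nonneg (g z)]
      have hlt : Complex.normSq (A - g z) < Complex.normSq (1 - (starRingEnd ℂ) A * g z) := by
        nlinarith
      calc ‖A - g z‖ = Real.sqrt (Complex.normSq (A - g z)) := by
            rw [Complex.norm_def]
        _ < Real.sqrt (Complex.normSq (1 - (starRingEnd ℂ) A * g z)) :=
            Real.sqrt_lt_sqrt (Complex.normSq_nonneg _) hlt
        _ = ‖1 - (starRingEnd ℂ) A * g z‖ := by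
            rw [Complex.norm_def]
    have hschwarz : ‖deriv h 0‖ ≤ 1 :=
      Complex.norm_deriv_le_one_of_mapsTo_ball hhd
        (by rw [hh0]; exact hhm.mono_right ball_subset_closedBall) one_pos
    -- compute deriv h 0
    have hu : HasDerivAt (fun z => A - g z) (0 - deriv g 0) 0 :=
      (hasDerivAt_const 0 A).sub (atomD hgA h01)
    have hv : HasDerivAt (fun z => 1 - (starRingEnd ℂ) A * g z)
        (0 - ((starRingEnd ℂ) A * deriv g 0 + 0 * g 0)) 0 := by
      exact (hasDerivAt_const 0 1).sub
        ((hasDerivAt_const 0 ((starRingEnd ℂ) A)).mul (atomD hgA h01)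
          |>.congr_deriv (by ring))
    have hquot : HasDerivAt h _ 0 := hu.div hv (hden 0 h01)
    have hg0A : g 0 = A := rfl
    have hnormA : Complex.normSq A < 1 := by
      rw [Complex.normSq_eq_norm_sq]
      nlinarith [norm_nonneg A]
    have hCpos : (0:ℝ) < 1 - Complex.normSq A := by linarith
    have hC : (1 : ℂ) - (starRingEnd ℂ) A * A = ((1 - Complex.normSq A : ℝ) : ℂ) := by
      rw [mul_comm, Complex.mul_conj]
      push_cast
      ring
    have hCne : ((1 - Complex.normSq A : ℝ) : ℂ) ≠ 0 := by
      exact_mod_cast hCpos.ne'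
    set C : ℂ := ((1 - Complex.normSq A : ℝ) : ℂ) with hCdef
    have hD : deriv h 0 = -(deriv g 0) / C := by
      rw [hquot.deriv, hg0A, hC]
      rw [div_eq_div_iff (pow_ne_zero 2 hCne) hCne]
      ring
    have habsD : ‖deriv h 0‖
        = ‖deriv g 0‖ / (1 - Complex.normSq A) := by
      rw [hD, norm_div, norm_neg, hCdef, Complex.norm_real, Real.norm_eq_abs,
        _root_.abs_of_pos hCpos]
    rw [habsD, div_le_one hCpos] at hschwarz
    rw [show ‖g 0‖ ^ 2 = Complex.normSq (g 0) from
      (Complex.normSq_eq_norm_sq (g 0)).symm]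
    exact hschwarz
  

lemma memE_set : Metric.eball (0:ℂ) 1 = ball (0:ℂ) 1 := Set.ext fun _ => memE_iff

/-- Values of the first iterated derivatives at `0` from the sum representation. -/
lemma deriv_vals {f : ℂ → ℂ} {a : ℕ → ℂ}
    (h : ∀ z ∈ ball (0:ℂ) 1, HasSum (fun n => a n * z ^ n) (f z)) :
    f 0 = a 0 ∧ deriv f 0 = a 1 ∧ deriv (deriv f) 0 = 2 * a 2 ∧
      deriv (deriv (deriv f)) 0 = 6 * a 3 := by
  have h0 := iteratedDeriv_of_hasSum h 0
  have h1 := iteratedDeriv_of_hasSum h 1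
  have h2 := iteratedDeriv_of_hasSum h 2
  have h3 := iteratedDeriv_of_hasSum h 3
  rw [iteratedDeriv_zero] at h0
  rw [iteratedDeriv_one] at h1
  rw [show iteratedDeriv 2 f = deriv (deriv f) by
    rw [iteratedDeriv_succ, iteratedDeriv_one]] at h2
  rw [show iteratedDeriv 3 f = deriv (deriv (deriv f)) by
    rw [iteratedDeriv_succ, iteratedDeriv_succ, iteratedDeriv_one]] at h3
  norm_num at h0 h1 h2 h3
  exact ⟨h0, h1, h2, h3⟩

/-- The key coefficient identities for `f ∈ S*(φ)`. -/
lemma key_coeff {phi f w : ℂ → ℂ} {B : ℕ → ℝ} {a : ℕ → ℂ}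
    (hphiD : DifferentiableOn ℂ phi (ball (0:ℂ) 1))
    (hphiS : ∀ z ∈ ball (0:ℂ) 1, HasSum (fun n => (B n : ℂ) * z ^ n) (phi z))
    (hB0 : B 0 = 1)
    (hfa : InClassA f a) (hw : IsSchwarz w)
    (heq : ∀ z ∈ ball (0:ℂ) 1, z * deriv f z = phi (w z) * f z) :
    a 2 = (B 1 : ℂ) * deriv w 0 ∧
    (12:ℂ) * a 3 = 6 * ((B 2 : ℂ) + (B 1:ℂ)^2) * (deriv w 0)^2
      + 3 * (B 1:ℂ) * deriv (deriv w) 0 := by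
  obtain ⟨ha0, ha1, hsum⟩ := hfa
  obtain ⟨hwD, hw0, hwm⟩ := hw
  have h01 : (0:ℂ) ∈ ball (0:ℂ) 1 := mem_ball_self one_pos
  have hfp := hasFPSOB_of_hasSum hsum
  have hfD : DifferentiableOn ℂ f (ball (0:ℂ) 1) := by
    have := hfp.differentiableOn
    rwa [memE_set] at this
  have fA : AnalyticOnNhd ℂ f (ball (0:ℂ) 1) := hfD.analyticOnNhd isOpen_ball
  have dfA := fA.deriv
  have f2A := dfA.deriv
  have f3A := f2A.deriv
  have wA : AnalyticOnNhd ℂ w (ball (0:ℂ) 1) := hwD.analyticOnNhd isOpen_ball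
  have dwA := wA.deriv
  have w2A := dwA.deriv
  have pA : AnalyticOnNhd ℂ phi (ball (0:ℂ) 1) := hphiD.analyticOnNhd isOpen_ball
  have dpA := pA.deriv
  have p2A := dpA.deriv
  -- derivative values at the origin
  obtain ⟨hf0, hdf0, hf20, hf30⟩ := deriv_vals hsum
  rw [ha0] at hf0
  rw [ha1] at hdf0
  obtain ⟨hp0, hdp0, hp20, -⟩ := deriv_vals hphiS
  rw [show ((B 0 : ℂ)) = 1 by rw [hB0]; norm_num] at hp0
  -- atoms
  have hpw : ∀ z ∈ ball (0:ℂ) 1,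
      HasDerivAt (fun z => phi (w z)) (deriv phi (w z) * deriv w z) z :=
    fun z hz => (atomD pA (hwm z hz)).comp z (atomD wA hz)
  have hdpw : ∀ z ∈ ball (0:ℂ) 1,
      HasDerivAt (fun z => deriv phi (w z)) (deriv (deriv phi) (w z) * deriv w z) z :=
    fun z hz => (atomD dpA (hwm z hz)).comp z (atomD wA hz)
  have hp2w : ∀ z ∈ ball (0:ℂ) 1,
      HasDerivAt (fun z => deriv (deriv phi) (w z))
        (deriv (deriv (deriv phi)) (w z) * deriv w z) z :=
    fun z hz => (atomD p2A (hwm z hz)).comp z (atomD wA hz)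
  -- level 0
  have E0 : Set.EqOn (fun z => z * deriv f z) (fun z => phi (w z) * f z) (ball (0:ℂ) 1) :=
    fun z hz => heq z hz
  -- level 1
  have E1 : Set.EqOn (fun z => 1 * deriv f z + z * deriv (deriv f) z)
      (fun z => deriv phi (w z) * deriv w z * f z + phi (w z) * deriv f z)
      (ball (0:ℂ) 1) :=
    derivStep E0
      (fun z hz => (hasDerivAt_id z).mul (atomD dfA hz))
      (fun z hz => ((hpw z hz).mul (atomD fA hz)))
  -- level 2
  have E2 : Set.EqOn
      (fun z => 1 * deriv (deriv f) z +
        (1 * deriv (deriv f) z + z * deriv (deriv (deriv f)) z))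
      (fun z => ((deriv (deriv phi) (w z) * deriv w z * deriv w z +
          deriv phi (w z) * deriv (deriv w) z) * f z +
          deriv phi (w z) * deriv w z * deriv f z) +
        (deriv phi (w z) * deriv w z * deriv f z + phi (w z) * deriv (deriv f) z))
      (ball (0:ℂ) 1) :=
    derivStep E1
      (fun z hz => ((atomD dfA hz).const_mul 1).add
        ((hasDerivAt_id z).mul (atomD f2A hz)))
      (fun z hz => (((hdpw z hz).mul (atomD dwA hz)).mul (atomD fA hz)).add
        ((hpw z hz).mul (atomD dfA hz)))
  -- coefficient of z²
  have h2 := E2 h01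
  simp only [hw0, hf0, hdf0, hf20, hp0, hdp0, mul_zero, zero_mul, mul_one, one_mul,
    add_zero, zero_add] at h2
  have ha2 : a 2 = (B 1 : ℂ) * deriv w 0 := by linear_combination h2 / 2
  refine ⟨ha2, ?_⟩
  -- coefficient of z³ : differentiate E2 once more, at the origin
  have h3 : deriv (fun z => 1 * deriv (deriv f) z +
        (1 * deriv (deriv f) z + z * deriv (deriv (deriv f)) z)) 0
      = deriv (fun z => ((deriv (deriv phi) (w z) * deriv w z * deriv w z +
          deriv phi (w z) * deriv (deriv w) z) * f z +
          deriv phi (w z) * deriv w z * deriv f z) +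
        (deriv phi (w z) * deriv w z * deriv f z + phi (w z) * deriv (deriv f) z)) 0 :=
    Filter.EventuallyEq.deriv_eq (Filter.eventuallyEq_of_mem (isOpen_ball.mem_nhds h01) E2)
  have hu2 : HasDerivAt (fun z => 1 * deriv (deriv f) z +
        (1 * deriv (deriv f) z + z * deriv (deriv (deriv f)) z))
      (1 * deriv (deriv (deriv f)) 0 + (1 * deriv (deriv (deriv f)) 0 +
        (1 * deriv (deriv (deriv f)) 0 + 0 * deriv (deriv (deriv (deriv f))) 0))) 0 :=
    ((atomD f2A h01).const_mul 1).add (((atomD f2A h01).const_mul 1).add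
      ((hasDerivAt_id (0:ℂ)).mul (atomD f3A h01)))
  have hv2 : HasDerivAt (fun z => ((deriv (deriv phi) (w z) * deriv w z * deriv w z +
          deriv phi (w z) * deriv (deriv w) z) * f z +
          deriv phi (w z) * deriv w z * deriv f z) +
        (deriv phi (w z) * deriv w z * deriv f z + phi (w z) * deriv (deriv f) z)) _ 0 :=
    ((((((hp2w 0 h01).mul (atomD dwA h01)).mul (atomD dwA h01)).add
      ((hdpw 0 h01).mul (atomD w2A h01))).mul (atomD fA h01)).add
      ((((hdpw 0 h01).mul (atomD dwA h01)).mul (atomD dfA h01)))).add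
      (((((hdpw 0 h01).mul (atomD dwA h01)).mul (atomD dfA h01))).add
      ((hpw 0 h01).mul (atomD f2A h01)))
  rw [hu2.deriv, hv2.deriv] at h3
  simp only [hw0, hf0, hdf0, hf20, hf30, hp0, hdp0, hp20, mul_zero, zero_mul, mul_one,
    one_mul, add_zero, zero_add, id_eq, Pi.mul_apply, Pi.add_apply] at h3
  rw [ha2] at h3
  linear_combination h3

set_option maxHeartbeats 1000000 in
theorem stmt_6 (phi : ℂ → ℂ) (B : ℕ → ℝ)
    (hphi : IsMaMinda phi B)
    (hcond : B 1 ≤ |B 2 - 2 * B 1 ^ 2|) :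
    (∀ f a, InClassA f a → MemStarPhi phi f →
      ‖G₁ a ^ 2 - G₂ a ^ 2‖ ≤ B 1 ^ 2 / 4 + (2 * B 1 ^ 2 - B 2) ^ 2 / 16) ∧
    ∃ f a, InClassA f a ∧ MemStarPhi phi f ∧
      ‖G₁ a ^ 2 - G₂ a ^ 2‖ = B 1 ^ 2 / 4 + (2 * B 1 ^ 2 - B 2) ^ 2 / 16 := by
  obtain ⟨hphiD, hphiI, hphiS, hB0, hB1, hRe, hSym, hStar⟩ := hphi
  constructor
  · -- the universal bound
    rintro f a hfa ⟨w, hw, heq⟩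
    obtain ⟨ha2, ha3⟩ := key_coeff hphiD hphiS hB0 hfa hw heq
    obtain ⟨hc1, hc2⟩ := schwarz_coeff hw
    set c1 := deriv w 0 with hc1def
    set c2 := deriv (deriv w) 0 with hc2def
    set u := ‖c1‖ with hudef
    set v := ‖c2‖ with hvdef
    set μ := |B 2 - 2 * B 1 ^ 2| with hμdef
    have hu0 : 0 ≤ u := norm_nonneg c1
    have hv0 : 0 ≤ v := norm_nonneg c2
    have hμ0 : 0 ≤ μ := abs_nonneg _
    have hX : a 3 - (3/2) * a 2 ^ 2
        = ((B 2 : ℂ) - 2 * (B 1:ℂ)^2)/2 * c1^2 + (B 1:ℂ)/4 * c2 := by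
      linear_combination ha3 / 12 - (3/2) * (a 2 + (B 1:ℂ) * c1) * ha2
    have hsplit : G₁ a ^ 2 - G₂ a ^ 2
        = (a 2)^2/4 - (a 3 - (3/2) * a 2 ^ 2)^2/4 := by
      rw [G₁, G₂]; ring
    have habs2 : ‖a 2‖ = B 1 * u := by
      rw [ha2, norm_mul, Complex.norm_real, Real.norm_eq_abs, _root_.abs_of_pos hB1]
    have habsX : ‖a 3 - (3/2) * a 2 ^ 2‖ ≤ μ/2 * u^2 + B 1/4 * v := by
      rw [hX]
      calc ‖((B 2 : ℂ) - 2 * (B 1:ℂ)^2)/2 * c1^2 + (B 1:ℂ)/4 * c2‖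
          ≤ ‖((B 2 : ℂ) - 2 * (B 1:ℂ)^2)/2 * c1^2‖
            + ‖(B 1:ℂ)/4 * c2‖ := norm_add_le _ _
        _ = μ/2 * u^2 + B 1/4 * v := by
            rw [norm_mul, norm_mul, norm_div, norm_div, norm_pow]
            rw [show ((B 2 : ℂ) - 2 * (B 1:ℂ)^2) = ((B 2 - 2 * B 1 ^ 2 : ℝ) : ℂ) by
              push_cast; ring]
            simp only [Complex.norm_real, Real.norm_eq_abs]
            rw [_root_.abs_of_pos hB1]
            norm_num
            rfl
    have hmain : ‖G₁ a ^ 2 - G₂ a ^ 2‖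
        ≤ (B 1 * u)^2/4 + (μ/2 * u^2 + B 1/4 * v)^2/4 := by
      rw [hsplit]
      calc ‖(a 2)^2/4 - (a 3 - (3/2) * a 2 ^ 2)^2/4‖
          ≤ ‖(a 2)^2/4‖ + ‖(a 3 - (3/2) * a 2 ^ 2)^2/4‖ := by
            exact norm_sub_le _ _
        _ = (‖a 2‖)^2/4 + (‖a 3 - (3/2) * a 2 ^ 2‖)^2/4 := by
            rw [norm_div, norm_div, norm_pow, norm_pow]
            norm_num
        _ ≤ (B 1 * u)^2/4 + (μ/2 * u^2 + B 1/4 * v)^2/4 := by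
            rw [habs2]
            have h1 : 0 ≤ ‖a 3 - (3/2) * a 2 ^ 2‖ := norm_nonneg _
            have h2 := habsX
            nlinarith
    refine le_trans hmain ?_
    have hμsq : (2 * B 1 ^ 2 - B 2)^2 = μ^2 := by
      rw [hμdef, _root_.sq_abs]; ring
    rw [hμsq]
    have hu1 : u ≤ 1 := hc1
    have hvb : v ≤ 2 * (1 - u^2) := hc2
    have hq : μ/2 * u^2 + B 1/4 * v ≤ μ/2 := by nlinarith
    have hq0 : 0 ≤ μ/2 * u^2 + B 1/4 * v := by positivity
    have hq2 : (μ/2 * u^2 + B 1/4 * v)^2 ≤ (μ/2)^2 := by nlinarith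
    nlinarith
  · -- the extremal function  f(z) = z·exp(∑ Bₙ iⁿ zⁿ / n)
    have h01 : (0:ℂ) ∈ ball (0:ℂ) 1 := mem_ball_self one_pos
    set d : ℕ → ℂ := fun n => if n = 0 then 0 else (B n : ℂ) * Complex.I ^ n / n with hddef
    set p := ofScalars ℂ d with hpdef
    have hdb : ∀ n, ‖d n‖ ≤ |B n| := by
      intro n
      match n with
      | 0 => simp [hddef]
      | (n+1) =>
        rw [hddef]
        simp only [Nat.succ_ne_zero, if_false]
        rw [norm_div, norm_mul, norm_pow, Complex.norm_I, one_pow, mul_one,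
          Complex.norm_real, Real.norm_eq_abs]
        have h1 : (1:ℝ) ≤ ‖((n+1 : ℕ) : ℂ)‖ := by
          rw [Complex.norm_natCast]
          exact_mod_cast Nat.one_le_iff_ne_zero.mpr (Nat.succ_ne_zero n)
        exact div_le_self (abs_nonneg _) h1
    have hrad : 1 ≤ p.radius := by
      apply ENNReal.le_of_forall_nnreal_lt
      intro r hr
      have hr1 : (r:ℝ) < 1 := by exact_mod_cast hr
      have hz : ((r:ℝ):ℂ) ∈ ball (0:ℂ) 1 := by
        rw [mem_ball_zero_iff, Complex.norm_real, Real.norm_eq_abs,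
          _root_.abs_of_nonneg r.coe_nonneg]
        exact hr1
      have hsumB := (hphiS _ hz).summable
      have htB : Tendsto (fun n => ‖(B n : ℂ) * ((r:ℝ):ℂ) ^ n‖) atTop (nhds 0) :=
        tendsto_zero_iff_norm_tendsto_zero.mp hsumB.tendsto_atTop_zero
      have ht : Tendsto (fun n => ‖p n‖ * (r:ℝ) ^ n) atTop (nhds 0) := by
        apply squeeze_zero (fun n => by positivity)
          (g := fun n => ‖(B n : ℂ) * ((r:ℝ):ℂ) ^ n‖) ?_ htB
        intro n
        have hr' : ‖(B n:ℂ) * ((r:ℝ):ℂ)^n‖ = |B n| * (r:ℝ)^n := by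
          rw [norm_mul, norm_pow, Complex.norm_real, Real.norm_eq_abs,
            Complex.norm_real, Real.norm_eq_abs, _root_.abs_of_nonneg r.coe_nonneg]
        show ‖p n‖ * (r:ℝ)^n ≤ ‖(B n:ℂ) * ((r:ℝ):ℂ)^n‖
        rw [hr', hpdef, ofScalars_norm]
        exact mul_le_mul_of_nonneg_right (hdb n) (by positivity)
      exact p.le_radius_of_tendsto ht
    have hppos : (0:ℝ≥0∞) < p.radius := lt_of_lt_of_le one_pos hrad
    set h := p.sum with hhdef
    have hps : HasFPowerSeriesOnBall h p 0 1 :=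
      (p.hasFPowerSeriesOnBall hppos).mono one_pos hrad
    have hhD : DifferentiableOn ℂ h (ball (0:ℂ) 1) := by
      have := hps.differentiableOn
      rwa [memE_set] at this
    have hhA : AnalyticOnNhd ℂ h (ball (0:ℂ) 1) := hhD.analyticOnNhd isOpen_ball
    have hh0 : h 0 = 0 := by
      have hs0 := hps.hasSum (x := 0) (by rw [memE_set]; exact h01)
      rw [add_zero] at hs0
      have hz : (fun n => p n fun _ => (0:ℂ)) = fun _ => (0:ℂ) := by
        funext n
        rw [hpdef, ofScalars_apply_eq]
        match n with
        | 0 => simp [hddef]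
        | (n+1) => simp
      rw [hz] at hs0
      exact hs0.unique hasSum_zero
    -- the key differential identity for h
    have hkey : ∀ z ∈ ball (0:ℂ) 1, z * deriv h z = phi (Complex.I * z) - 1 := by
      intro z hz
      have hz' : z ∈ Metric.eball (0:ℂ) 1 := by rw [memE_set]; exact hz
      have hs1 := hps.fderiv.hasSum hz'
      rw [zero_add] at hs1
      have hs2 := hs1.mapL (ContinuousLinearMap.apply ℂ ℂ z)
      simp only [ContinuousLinearMap.apply_apply] at hs2
      have hterm : (fun n => (p.derivSeries n fun _ => z) z)
          = fun n => (B (n+1) : ℂ) * (Complex.I * z)^(n+1) := by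
        funext n
        rw [FormalMultilinearSeries.derivSeries_apply_diag]
        rw [hpdef, ofScalars_apply_eq]
        rw [hddef]
        simp only [Nat.succ_ne_zero, if_false]
        have hne : ((n+1 : ℕ) : ℂ) ≠ 0 := by
          exact_mod_cast Nat.succ_ne_zero n
        have hne2 : ((n:ℂ) + 1) ≠ 0 := Nat.cast_add_one_ne_zero n
        rw [smul_eq_mul, nsmul_eq_mul, mul_pow]
        push_cast
        field_simp
      rw [hterm] at hs2
      have hmem : Complex.I * z ∈ ball (0:ℂ) 1 := by
        rw [mem_ball_zero_iff, norm_mul, Complex.norm_I, one_mul]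
        exact mem_ball_zero_iff.mp hz
      have hφ := hphiS _ hmem
      have hs4 : HasSum (fun n => (B (n+1) : ℂ) * (Complex.I * z)^(n+1))
          (phi (Complex.I * z) - 1) := by
        refine (hasSum_nat_add_iff (f := fun n => (B n : ℂ) * (Complex.I*z)^n) 1).mpr ?_
        have : phi (Complex.I * z) - 1 + ∑ i ∈ Finset.range 1,
            (B i : ℂ) * (Complex.I * z)^i = phi (Complex.I * z) := by
          simp [hB0]
        rw [this]
        exact hφ
      have heqd := hs2.unique hs4
      have hzz : fderiv ℂ h z z = z * deriv h z := by
        have h9 : fderiv ℂ h z z = fderiv ℂ h z (z • 1) := by norm_num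
        rw [h9, ContinuousLinearMap.map_smul, smul_eq_mul, fderiv_apply_one_eq_deriv]
      rw [← hzz, heqd]
    -- the extremal function
    set f : ℂ → ℂ := fun z => z * Complex.exp (h z) with hfdef
    have hfD : DifferentiableOn ℂ f (ball (0:ℂ) 1) :=
      differentiableOn_id.mul (Complex.differentiable_exp.comp_differentiableOn hhD)
    set a : ℕ → ℂ := fun n => iteratedDeriv n f 0 / n.factorial with hadef
    have hsumf := hasSum_of_differentiableOn hfD
    have hderivf : ∀ z ∈ ball (0:ℂ) 1, HasDerivAt f
        (1 * Complex.exp (h z) + z * (Complex.exp (h z) * deriv h z)) z :=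
      fun z hz => (hasDerivAt_id z).mul
        ((Complex.hasDerivAt_exp (h z)).comp z (atomD hhA hz))
    have hf00 : f 0 = 0 := by rw [hfdef]; simp
    have ha0 : a 0 = 0 := by
      rw [hadef]
      simp only [iteratedDeriv_zero, hf00]
      norm_num
    have ha1 : a 1 = 1 := by
      rw [hadef]
      simp only [iteratedDeriv_one]
      rw [(hderivf 0 h01).deriv, hh0]
      norm_num
    have hIA : InClassA f a := ⟨ha0, ha1, hsumf⟩
    set w : ℂ → ℂ := fun z => Complex.I * z with hwdef
    have hwS : IsSchwarz w := by
      refine ⟨(differentiable_id.const_mul Complex.I).differentiableOn, by simp [hwdef], ?_⟩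
      intro z hz
      rw [hwdef]
      rw [mem_ball_zero_iff, norm_mul, Complex.norm_I, one_mul]
      exact mem_ball_zero_iff.mp hz
    have heqf : ∀ z ∈ ball (0:ℂ) 1, z * deriv f z = phi (w z) * f z := by
      intro z hz
      rw [(hderivf z hz).deriv, hwdef, hfdef]
      have hk := hkey z hz
      linear_combination Complex.exp (h z) * z * hk
    have hMS : MemStarPhi phi f := ⟨w, hwS, heqf⟩
    refine ⟨f, a, hIA, hMS, ?_⟩
    -- compute the coefficients
    obtain ⟨ha2, ha3⟩ := key_coeff hphiD hphiS hB0 hIA hwS heqf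
    have hdw : deriv w = fun _ => Complex.I := by
      funext z
      rw [hwdef]
      simpa using ((hasDerivAt_id z).const_mul Complex.I).deriv
    have hdw0 : deriv w 0 = Complex.I := by rw [hdw]
    have hddw0 : deriv (deriv w) 0 = 0 := by rw [hdw]; exact deriv_const 0 _
    rw [hdw0] at ha2
    rw [hdw0, hddw0] at ha3
    have ha2sq : a 2 ^ 2 = -((B 1:ℂ)^2) := by
      rw [ha2, mul_pow, Complex.I_sq]; ring
    have ha3' : a 3 = -((B 2:ℂ) + (B 1:ℂ)^2)/2 := by
      have hI2 : (Complex.I)^2 = -1 := Complex.I_sq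
      linear_combination ha3 / 12 + ((B 2:ℂ) + (B 1:ℂ)^2) / 2 * hI2
    have hval : G₁ a ^ 2 - G₂ a ^ 2
        = -(((B 1 ^ 2 / 4 + (2 * B 1 ^ 2 - B 2) ^ 2 / 16 : ℝ)) : ℂ) := by
      have hsplit : G₁ a ^ 2 - G₂ a ^ 2
          = (a 2)^2/4 - (a 3 - (3/2) * a 2 ^ 2)^2/4 := by rw [G₁, G₂]; ring
      rw [hsplit, ha2sq, ha3']
      push_cast
      ring
    rw [hval, norm_neg, Complex.norm_real, Real.norm_eq_abs,
      _root_.abs_of_nonneg (by positivity)]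
end
end
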